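/- arXiv:2012.05307 — 11 statements merged into one kernel-verified Lean document; each statement's English description precedes it below -/
import Mathlib

section
/- Let F be a field and let M be an n×m matrix over F. Then there exist unitriangular matrices A ∈ T_n(F) and B ∈ T_m(F) such that the product A·M·B is a rook matrix. (Existence part of the enhanced Bruhat decomposition: every orbit of the action of T_n(F) × T_m(F) on n×m matrices contains a rook matrix.) -/
/-- A square matrix is unitriangular if it is upper triangular with 1's on the diagonal. -/
def Matrix.IsUnitriangular {n : ℕ} {R : Type*} [Zero R] [One R]
    (A : Matrix (Fin n) (Fin n) R) : Prop :=
  (∀ i, A i i = 1) ∧ ∀ i j : Fin n, j < i → A i j = 0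

/-- A matrix is a rook matrix if every row and every column contains
at most one nonzero entry. -/
def Matrix.IsRook {n m : ℕ} {F : Type*} [Zero F]
    (R : Matrix (Fin n) (Fin m) F) : Prop :=
  (∀ i j j', R i j ≠ 0 → R i j' ≠ 0 → j = j') ∧
  (∀ i i' j, R i j ≠ 0 → R i' j ≠ 0 → i = i')

section
variable {F : Type*} [Field F]

lemma unitri_one {n : ℕ} : (1 : Matrix (Fin n) (Fin n) F).IsUnitriangular := by
  constructor
  · intro i; simp [Matrix.one_apply]
  · intro i j h; simp [Matrix.one_apply, (ne_of_lt h).symm]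

lemma unitri_mul {n : ℕ} {A B : Matrix (Fin n) (Fin n) F}
    (hA : A.IsUnitriangular) (hB : B.IsUnitriangular) : (A*B).IsUnitriangular := by
  constructor
  · intro i
    rw [Matrix.mul_apply, Finset.sum_eq_single i]
    · rw [hA.1, hB.1, one_mul]
    · intro k _ hk
      rcases lt_or_gt_of_ne hk with h | h
      · rw [hA.2 _ _ h, zero_mul]
      · rw [hB.2 _ _ h, mul_zero]
    · simp
  · intro i j hij
    rw [Matrix.mul_apply]
    apply Finset.sum_eq_zero
    intro k _
    rcases lt_or_ge k i with h | h
    · rw [hA.2 _ _ h, zero_mul]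
    · rw [hB.2 _ _ (lt_of_lt_of_le hij h), mul_zero]

lemma rook_mono {n m : ℕ} {R S : Matrix (Fin n) (Fin m) F}
    (h : ∀ i j, S i j ≠ 0 → R i j ≠ 0) (hR : R.IsRook) : S.IsRook :=
  ⟨fun i j j' h1 h2 => hR.1 i j j' (h _ _ h1) (h _ _ h2),
   fun i i' j h1 h2 => hR.2 i i' j (h _ _ h1) (h _ _ h2)⟩

lemma fixB_key {n m : ℕ} (N : Matrix (Fin n) (Fin m) F) (B B' : Matrix (Fin m) (Fin m) F)
    (Z : Fin m → Prop) [DecidablePred Z]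
    (hNz : ∀ c, Z c → ∀ i, N i c = 0)
    (hB'app : ∀ k j, B' k j = if k = j then B k j else if Z k ∨ Z j then 0 else B k j) :
    ∀ i j, (N * B') i j = if Z j then 0 else (N * B) i j := by
  intro i j
  by_cases hj : Z j
  · rw [if_pos hj, Matrix.mul_apply]
    apply Finset.sum_eq_zero
    intro k _
    rw [hB'app]
    by_cases hk : k = j
    · subst hk; rw [if_pos rfl, hNz k hj i, zero_mul]
    · rw [if_neg hk, if_pos (Or.inr hj), mul_zero]
  · rw [if_neg hj, Matrix.mul_apply, Matrix.mul_apply]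
    apply Finset.sum_congr rfl
    intro k _
    rw [hB'app]
    by_cases hk : k = j
    · rw [if_pos hk]
    · rw [if_neg hk]
      by_cases hzk : Z k
      · rw [if_pos (Or.inl hzk), hNz k hzk i, zero_mul, zero_mul]
      · rw [if_neg (by tauto)]

lemma fix_B {n m : ℕ} (M : Matrix (Fin n) (Fin m) F) (A : Matrix (Fin n) (Fin n) F)
    (B : Matrix (Fin m) (Fin m) F) (hB : B.IsUnitriangular) (hR : (A*M*B).IsRook) :
    ∃ B' : Matrix (Fin m) (Fin m) F, B'.IsUnitriangular ∧ (A*M*B').IsRook ∧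
      ∀ c : Fin m, (∀ i, M i c = 0) →
        ((∀ k, k ≠ c → B' c k = 0) ∧ (∀ i, (A*M*B') i c = 0)) := by
  classical
  set Z : Fin m → Prop := fun c => ∀ i, M i c = 0 with hZdef
  set B' : Matrix (Fin m) (Fin m) F :=
    Matrix.of (fun k j => if k = j then B k j else if Z k ∨ Z j then 0 else B k j) with hB'def
  have hB'app : ∀ k j, B' k j = if k = j then B k j else if Z k ∨ Z j then 0 else B k j :=
    fun k j => rfl
  have hNz : ∀ c, Z c → ∀ i, (A*M) i c = 0 := by
    intro c hc i
    rw [Matrix.mul_apply]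
    exact Finset.sum_eq_zero fun k _ => by rw [hc k, mul_zero]
  have key := fixB_key (A*M) B B' Z hNz hB'app
  refine ⟨B', ?_, ?_, ?_⟩
  · constructor
    · intro i; rw [hB'app, if_pos rfl]; exact hB.1 i
    · intro i j hij
      rw [hB'app, if_neg (ne_of_gt hij)]
      by_cases h : Z i ∨ Z j
      · rw [if_pos h]
      · rw [if_neg h]; exact hB.2 i j hij
  · apply rook_mono (R := A*M*B) _ hR
    intro i j hS
    rw [key] at hS
    by_cases hj : Z j
    · rw [if_pos hj] at hS; exact absurd rfl hS
    · rwa [if_neg hj] at hS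
  · intro c hc
    constructor
    · intro k hk
      rw [hB'app, if_neg (fun h => hk h.symm), if_pos (Or.inl hc)]
    · intro i
      rw [key, if_pos hc]
end

section
variable {F : Type*} [Field F]

def extMat {n : ℕ} (A : Matrix (Fin n) (Fin n) F) : Matrix (Fin (n+1)) (Fin (n+1)) F :=
  Matrix.of fun i j =>
    if hi : i = Fin.last n then (if j = i then 1 else 0)
    else if hj : j = Fin.last n then 0 else A (i.castPred hi) (j.castPred hj)

lemma extMat_apply_last {n : ℕ} (A : Matrix (Fin n) (Fin n) F) (j : Fin (n+1)) :
    extMat A (Fin.last n) j = if j = Fin.last n then 1 else 0 := by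
  unfold extMat; rw [Matrix.of_apply, dif_pos rfl]

lemma extMat_apply_ne {n : ℕ} (A : Matrix (Fin n) (Fin n) F) {i j : Fin (n+1)}
    (hi : i ≠ Fin.last n) (hj : j ≠ Fin.last n) :
    extMat A i j = A (i.castPred hi) (j.castPred hj) := by
  unfold extMat; rw [Matrix.of_apply, dif_neg hi, dif_neg hj]

lemma extMat_apply_ne_last {n : ℕ} (A : Matrix (Fin n) (Fin n) F) {i : Fin (n+1)}
    (hi : i ≠ Fin.last n) : extMat A i (Fin.last n) = 0 := by
  unfold extMat; rw [Matrix.of_apply, dif_neg hi, dif_pos rfl]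

lemma extMat_unitri {n : ℕ} {A : Matrix (Fin n) (Fin n) F} (hA : A.IsUnitriangular) :
    (extMat A).IsUnitriangular := by
  constructor
  · intro i
    by_cases hi : i = Fin.last n
    · subst hi; rw [extMat_apply_last, if_pos rfl]
    · rw [extMat_apply_ne A hi hi]; exact hA.1 _
  · intro i j hij
    have hj : j ≠ Fin.last n := ne_of_lt (lt_of_lt_of_le hij (Fin.le_last i))
    by_cases hi : i = Fin.last n
    · subst hi; rw [extMat_apply_last, if_neg hj]
    · rw [extMat_apply_ne A hi hj]
      exact hA.2 _ _ (Fin.castPred_lt_castPred_iff.2 hij)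

lemma extMat_mul_castSucc {n m : ℕ} (A : Matrix (Fin n) (Fin n) F)
    (M : Matrix (Fin (n+1)) (Fin m) F) (i : Fin n) (j : Fin m) :
    (extMat A * M) (i.castSucc) j = (A * (M.submatrix Fin.castSucc id)) i j := by
  rw [Matrix.mul_apply, Matrix.mul_apply, Fin.sum_univ_castSucc]
  rw [extMat_apply_ne_last A (Fin.castSucc_lt_last i).ne, zero_mul, add_zero]
  apply Finset.sum_congr rfl
  intro k _
  rw [extMat_apply_ne A (Fin.castSucc_lt_last i).ne (Fin.castSucc_lt_last k).ne]
  simp [Fin.castPred_castSucc]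

lemma extMat_mul_last {n m : ℕ} (A : Matrix (Fin n) (Fin n) F)
    (M : Matrix (Fin (n+1)) (Fin m) F) (j : Fin m) :
    (extMat A * M) (Fin.last n) j = M (Fin.last n) j := by
  rw [Matrix.mul_apply, Finset.sum_eq_single (Fin.last n)]
  · rw [extMat_apply_last, if_pos rfl, one_mul]
  · intro k _ hk
    rw [extMat_apply_last, if_neg hk, zero_mul]
  · simp
end

section
variable {F : Type*} [Field F]

lemma ext_triple_castSucc {n m : ℕ} (A : Matrix (Fin n) (Fin n) F)
    (M : Matrix (Fin (n+1)) (Fin m) F) (B : Matrix (Fin m) (Fin m) F) (i : Fin n) (j : Fin m) :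
    (extMat A * M * B) (i.castSucc) j = (A * (M.submatrix Fin.castSucc id) * B) i j := by
  rw [Matrix.mul_apply, Matrix.mul_apply]
  exact Finset.sum_congr rfl fun k _ => by rw [extMat_mul_castSucc]

lemma ext_triple_last {n m : ℕ} (A : Matrix (Fin n) (Fin n) F)
    (M : Matrix (Fin (n+1)) (Fin m) F) (B : Matrix (Fin m) (Fin m) F) (j : Fin m) :
    (extMat A * M * B) (Fin.last n) j = ∑ k, M (Fin.last n) k * B k j := by
  rw [Matrix.mul_apply]
  exact Finset.sum_congr rfl fun k _ => by rw [extMat_mul_last]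

/-- rook criterion given entrywise description of last row & top block -/
lemma rook_of_parts {n m : ℕ} {N : Matrix (Fin (n+1)) (Fin m) F}
    {R : Matrix (Fin n) (Fin m) F} {p : Fin m}
    (htop : ∀ i j, N (i.castSucc) j = R i j)
    (hlast : ∀ j, j ≠ p → N (Fin.last n) j = 0)
    (hcolp : ∀ i, R i p = 0)
    (hR : R.IsRook) : N.IsRook := by
  constructor
  · intro i
    refine Fin.lastCases ?_ ?_ i
    · intro j j' h1 h2
      have hj : j = p := by by_contra h; exact h1 (hlast j h)
      have hj' : j' = p := by by_contra h; exact h2 (hlast j' h)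
      rw [hj, hj']
    · intro i j j' h1 h2
      rw [htop] at h1 h2
      exact hR.1 i j j' h1 h2
  · intro i i' j
    refine Fin.lastCases ?_ (fun i0 => ?_) i
    · refine Fin.lastCases ?_ (fun i1 => ?_) i'
      · intro _ _; rfl
      · intro h1 h2
        rcases eq_or_ne j p with rfl | hjp
        · rw [htop, hcolp] at h2; exact absurd rfl h2
        · exact absurd (hlast j hjp) h1
    · refine Fin.lastCases ?_ (fun i1 => ?_) i'
      · intro h1 h2
        rcases eq_or_ne j p with rfl | hjp
        · rw [htop, hcolp] at h1; exact absurd rfl h1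
        · exact absurd (hlast j hjp) h2
      · intro h1 h2
        rw [htop] at h1 h2
        rw [hR.2 i0 i1 j h1 h2]

lemma bruhat_aux : ∀ (n m : ℕ) (M : Matrix (Fin n) (Fin m) F),
    ∃ (A : Matrix (Fin n) (Fin n) F) (B : Matrix (Fin m) (Fin m) F),
      A.IsUnitriangular ∧ B.IsUnitriangular ∧ (A * M * B).IsRook := by
  intro n
  induction n with
  | zero =>
    intro m M
    exact ⟨1, 1, unitri_one, unitri_one, fun i => i.elim0, fun i => i.elim0⟩
  | succ n ih =>
    intro m M
    classical
    by_cases hz : ∀ j, M (Fin.last n) j = 0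
    · -- last row is zero
      obtain ⟨A', B', hA', hB', hR⟩ := ih m (M.submatrix Fin.castSucc id)
      refine ⟨extMat A', B', extMat_unitri hA', hB', ?_⟩
      have hlast : ∀ j, (extMat A' * M * B') (Fin.last n) j = 0 := by
        intro j
        rw [ext_triple_last]
        exact Finset.sum_eq_zero fun k _ => by rw [hz k, zero_mul]
      constructor
      · intro i
        refine Fin.lastCases ?_ ?_ i
        · intro j j' h1 _; exact absurd (hlast j) h1
        · intro i0 j j' h1 h2
          rw [ext_triple_castSucc] at h1 h2
          exact hR.1 i0 j j' h1 h2
      · intro i i' j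
        refine Fin.lastCases ?_ (fun i0 => ?_) i
        · intro h1 _; exact absurd (hlast j) h1
        · refine Fin.lastCases ?_ (fun i1 => ?_) i'
          · intro _ h2; exact absurd (hlast j) h2
          · intro h1 h2
            rw [ext_triple_castSucc] at h1 h2
            rw [hR.2 i0 i1 j h1 h2]
    · -- last row nonzero: pivot
      push_neg at hz
      set s : Finset (Fin m) := Finset.univ.filter (fun j => M (Fin.last n) j ≠ 0) with hs
      have hsne : s.Nonempty := by
        obtain ⟨j, hj⟩ := hz
        exact ⟨j, by simp [hs, hj]⟩
      set p : Fin m := s.min' hsne with hpdef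
      have hp : M (Fin.last n) p ≠ 0 := by
        have := s.min'_mem hsne
        simpa [hs] using this
      have hmin : ∀ j, j < p → M (Fin.last n) j = 0 := by
        intro j hj
        by_contra h
        exact absurd (s.min'_le j (by simp [hs, h])) (not_le.2 hj)
      -- A1 = 1 + E1 clears column p above the last row
      set E1 : Matrix (Fin (n+1)) (Fin (n+1)) F :=
        Matrix.of (fun i k => if i ≠ Fin.last n ∧ k = Fin.last n
          then -(M i p) / M (Fin.last n) p else 0) with hE1
      have hE1app : ∀ i k, E1 i k = if i ≠ Fin.last n ∧ k = Fin.last n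
          then -(M i p) / M (Fin.last n) p else 0 := fun i k => rfl
      set A1 : Matrix (Fin (n+1)) (Fin (n+1)) F := 1 + E1 with hA1def
      have hA1 : A1.IsUnitriangular := by
        constructor
        · intro i
          rw [hA1def, Matrix.add_apply, Matrix.one_apply_eq, hE1app,
            if_neg (fun h : i ≠ Fin.last n ∧ i = Fin.last n => h.1 h.2), add_zero]
        · intro i j hij
          have hj : j ≠ Fin.last n := ne_of_lt (lt_of_lt_of_le hij (Fin.le_last i))
          rw [hA1def, Matrix.add_apply, Matrix.one_apply_ne (ne_of_gt hij), hE1app,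
            if_neg (fun h : _ ∧ _ => hj h.2), add_zero]
      have hM1 : ∀ i j, (A1 * M) i j = M i j +
          (if i = Fin.last n then 0
            else -(M i p) / M (Fin.last n) p * M (Fin.last n) j) := by
        intro i j
        rw [hA1def, Matrix.add_mul, Matrix.one_mul, Matrix.add_apply]
        congr 1
        rw [Matrix.mul_apply, Finset.sum_eq_single (Fin.last n)]
        · rw [hE1app]
          by_cases hi : i = Fin.last n
          · rw [if_neg (fun h : i ≠ Fin.last n ∧ Fin.last n = Fin.last n => h.1 hi), zero_mul, if_pos hi]
          · rw [if_pos ⟨hi, rfl⟩, if_neg hi]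
        · intro k _ hk
          rw [hE1app, if_neg (fun h : _ ∧ _ => hk h.2), zero_mul]
        · simp
      -- B1 = 1 + E2 clears the last row right of p
      set E2 : Matrix (Fin m) (Fin m) F :=
        Matrix.of (fun k j => if k = p ∧ j ≠ p
          then -(M (Fin.last n) j) / M (Fin.last n) p else 0) with hE2
      have hE2app : ∀ k j, E2 k j = if k = p ∧ j ≠ p
          then -(M (Fin.last n) j) / M (Fin.last n) p else 0 := fun k j => rfl
      set B1 : Matrix (Fin m) (Fin m) F := 1 + E2 with hB1def
      have hB1 : B1.IsUnitriangular := by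
        constructor
        · intro i
          rw [hB1def, Matrix.add_apply, Matrix.one_apply_eq, hE2app,
            if_neg (fun h : i = p ∧ i ≠ p => h.2 h.1), add_zero]
        · intro i j hij
          rw [hB1def, Matrix.add_apply, Matrix.one_apply_ne (ne_of_gt hij), hE2app, zero_add]
          by_cases hip : i = p ∧ j ≠ p
          · rw [if_pos hip, hmin j (hip.1 ▸ hij), neg_zero, zero_div]
          · rw [if_neg hip]
      set M2 : Matrix (Fin (n+1)) (Fin m) F := A1 * M * B1 with hM2def
      have hM2 : ∀ i j, M2 i j = (A1 * M) i j + (if j = p then 0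
          else (A1 * M) i p * (-(M (Fin.last n) j) / M (Fin.last n) p)) := by
        intro i j
        rw [hM2def, hB1def, Matrix.mul_add, Matrix.mul_one, Matrix.add_apply]
        congr 1
        rw [Matrix.mul_apply, Finset.sum_eq_single p]
        · rw [hE2app]
          by_cases hj : j = p
          · rw [if_neg (fun h : p = p ∧ j ≠ p => h.2 hj), mul_zero, if_pos hj]
          · rw [if_pos ⟨rfl, hj⟩, if_neg hj]
        · intro k _ hk
          rw [hE2app, if_neg (fun h : _ ∧ _ => hk h.1), mul_zero]
        · simp
      have hM1p : ∀ i, i ≠ Fin.last n → (A1 * M) i p = 0 := by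
        intro i hi
        rw [hM1, if_neg hi, div_mul_cancel₀ _ hp, add_neg_cancel]
      have hM1last : ∀ j, (A1 * M) (Fin.last n) j = M (Fin.last n) j := by
        intro j; rw [hM1, if_pos rfl, add_zero]
      have hM2p : ∀ i, i ≠ Fin.last n → M2 i p = 0 := by
        intro i hi; rw [hM2, if_pos rfl, add_zero, hM1p i hi]
      have hM2lastp : M2 (Fin.last n) p = M (Fin.last n) p := by
        rw [hM2, if_pos rfl, add_zero, hM1last]
      have hM2last : ∀ j, j ≠ p → M2 (Fin.last n) j = 0 := by
        intro j hj
        rw [hM2, if_neg hj, hM1last, hM1last, mul_comm (M (Fin.last n) p),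
          div_mul_cancel₀ _ hp, add_neg_cancel]
      obtain ⟨A', B0, hA', hB0, hR0⟩ := ih m (M2.submatrix Fin.castSucc id)
      obtain ⟨B', hB', hRook, hfix⟩ := fix_B (M2.submatrix Fin.castSucc id) A' B0 hB0 hR0
      have hpz : ∀ i : Fin n, (M2.submatrix Fin.castSucc id) i p = 0 :=
        fun i => hM2p _ (Fin.castSucc_lt_last i).ne
      obtain ⟨hBrow, hRcol⟩ := hfix p hpz
      refine ⟨extMat A' * A1, B1 * B', unitri_mul (extMat_unitri hA') hA1,
        unitri_mul hB1 hB', ?_⟩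
      have hassoc : extMat A' * A1 * M * (B1 * B') = extMat A' * M2 * B' := by
        rw [hM2def, Matrix.mul_assoc (extMat A') A1 M, ← Matrix.mul_assoc _ B1 B',
          Matrix.mul_assoc (extMat A') (A1 * M) B1]
      rw [hassoc]
      apply rook_of_parts (R := A' * M2.submatrix Fin.castSucc id * B') (p := p)
      · intro i j; exact ext_triple_castSucc ..
      · intro j hj
        rw [ext_triple_last, Finset.sum_eq_single p]
        · rw [hBrow j hj, mul_zero]
        · intro k _ hk
          rw [hM2last k hk, zero_mul]
        · simp
      · exact hRcol
      · exact hRook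
end

/-- Existence part of the enhanced Bruhat decomposition: for every `n × m` matrix `M`
over a field there are unitriangular matrices `A`, `B` such that `A * M * B` is a
rook matrix. -/
theorem enhanced_bruhat_existence {F : Type*} [Field F] {n m : ℕ}
    (M : Matrix (Fin n) (Fin m) F) :
    ∃ (A : Matrix (Fin n) (Fin n) F) (B : Matrix (Fin m) (Fin m) F),
      A.IsUnitriangular ∧ B.IsUnitriangular ∧ (A * M * B).IsRook := by
  exact bruhat_aux n m M
end

section
/- Let M be an n×m matrix with integer entries, and let R be the rook matrix of M regarded as a matrix over ℚ. Then for all unitriangular integer matrices A ∈ T_n(ℤ) and B ∈ T_m(ℤ), the matrix A·M·B (regarded over ℚ) belongs to the set Ll(R); that is, (A·M·B)_{i,j} = R_{i,j} for every position (i,j) that is not covered with respect to R. -/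
/-- A position `(i,j)` is covered w.r.t. a (rook) matrix `R` if there is a nonzero
entry of `R` at a position `(i',j')` with (i < i' and j ≥ j') or (i ≤ i' and j > j'). -/
def Matrix.Covered {n m : ℕ} {F : Type*} [Zero F]
    (R : Matrix (Fin n) (Fin m) F) (i : Fin n) (j : Fin m) : Prop :=
  ∃ i' j', R i' j' ≠ 0 ∧ ((i < i' ∧ j' ≤ j) ∨ (i ≤ i' ∧ j' < j))

lemma unitri_blockTriangular {n : ℕ} {U : Matrix (Fin n) (Fin n) ℚ}
    (hU : U.IsUnitriangular) : U.BlockTriangular id :=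
  fun _ _ h => hU.2 _ _ h

lemma unitri_det {n : ℕ} {U : Matrix (Fin n) (Fin n) ℚ}
    (hU : U.IsUnitriangular) : U.det = 1 := by
  rw [Matrix.det_of_upperTriangular (unitri_blockTriangular hU)]
  simp [hU.1]

lemma unitri_mul_s5 {n : ℕ} {U W : Matrix (Fin n) (Fin n) ℚ}
    (hU : U.IsUnitriangular) (hW : W.IsUnitriangular) : (U * W).IsUnitriangular := by
  constructor
  · intro i
    rw [Matrix.mul_apply, Finset.sum_eq_single i]
    · simp [hU.1, hW.1]
    · intro k _ hk
      rcases lt_or_gt_of_ne hk with h | h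
      · rw [hU.2 _ _ h, zero_mul]
      · rw [hW.2 _ _ h, mul_zero]
    · simp
  · intro i j hij
    rw [Matrix.mul_apply]
    apply Finset.sum_eq_zero
    intro k _
    rcases lt_or_ge k i with h | h
    · rw [hU.2 _ _ h, zero_mul]
    · rw [hW.2 _ _ (lt_of_lt_of_le hij h), mul_zero]

lemma unitri_inv {n : ℕ} {U : Matrix (Fin n) (Fin n) ℚ}
    (hU : U.IsUnitriangular) : U⁻¹.IsUnitriangular := by
  have hdet : IsUnit U.det := by rw [unitri_det hU]; exact isUnit_one
  have : Invertible U := U.invertibleOfIsUnitDet hdet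
  have hinvtri : U⁻¹.BlockTriangular id :=
    Matrix.blockTriangular_inv_of_blockTriangular (unitri_blockTriangular hU)
  refine ⟨?_, fun i j h => hinvtri h⟩
  intro i
  have h1 : U⁻¹ * U = 1 := Matrix.nonsing_inv_mul U hdet
  have := congrArg (fun N => N i i) h1
  simp only [Matrix.mul_apply, Matrix.one_apply_eq] at this
  rw [Finset.sum_eq_single i] at this
  · rw [hU.1 i, mul_one] at this; exact this
  · intro k _ hk
    rcases lt_or_gt_of_ne hk with h | h
    · rw [show U⁻¹ i k = 0 from hinvtri h, zero_mul]
    · rw [hU.2 _ _ h, mul_zero]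
  · simp

lemma core_lemma {n m : ℕ} (U : Matrix (Fin n) (Fin n) ℚ)
    (R : Matrix (Fin n) (Fin m) ℚ) (V : Matrix (Fin m) (Fin m) ℚ)
    (hU : U.IsUnitriangular) (hV : V.IsUnitriangular)
    (i : Fin n) (j : Fin m) (h : ¬ R.Covered i j) :
    (U * R * V) i j = R i j := by
  rw [Matrix.mul_apply]
  rw [Finset.sum_eq_single j]
  · rw [hV.1 j, mul_one, Matrix.mul_apply, Finset.sum_eq_single i]
    · rw [hU.1 i, one_mul]
    · intro k _ hk
      rcases lt_or_gt_of_ne hk with hlt | hgt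
      · rw [hU.2 _ _ hlt, zero_mul]
      · by_cases hR : R k j = 0
        · rw [hR, mul_zero]
        · exact absurd ⟨k, j, hR, Or.inl ⟨hgt, le_refl j⟩⟩ h
    · simp
  · intro l _ hl
    rcases lt_or_gt_of_ne hl with hlt | hgt
    · rw [show (U * R) i l = 0 from ?_, zero_mul]
      rw [Matrix.mul_apply]
      apply Finset.sum_eq_zero
      intro k _
      rcases lt_or_ge k i with hk | hk
      · rw [hU.2 _ _ hk, zero_mul]
      · by_cases hR : R k l = 0
        · rw [hR, mul_zero]
        · exact absurd ⟨k, l, hR, Or.inr ⟨hk, hlt⟩⟩ h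
    · rw [hV.2 _ _ hgt, mul_zero]
  · simp

/-- Integral version: if `R` is the rook matrix over `ℚ` of an integer matrix `M`,
then for all unitriangular integer matrices `A`, `B` the matrix `A * M * B`
(regarded over `ℚ`) agrees with `R` at every non-covered position. -/
theorem int_orbit_mem_bruhat_cell {n m : ℕ}
    (M : Matrix (Fin n) (Fin m) ℤ) (R : Matrix (Fin n) (Fin m) ℚ)
    (hRrook : R.IsRook)
    (hRorb : ∃ (A₀ : Matrix (Fin n) (Fin n) ℚ) (B₀ : Matrix (Fin m) (Fin m) ℚ),
      A₀.IsUnitriangular ∧ B₀.IsUnitriangular ∧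
      A₀ * M.map (Int.cast : ℤ → ℚ) * B₀ = R) :
    ∀ (A : Matrix (Fin n) (Fin n) ℤ) (B : Matrix (Fin m) (Fin m) ℤ),
      A.IsUnitriangular → B.IsUnitriangular →
      ∀ i j, ¬ R.Covered i j → ((A * M * B) i j : ℚ) = R i j := by
  obtain ⟨A₀, B₀, hA₀, hB₀, hR⟩ := hRorb
  intro A B hA hB i j hcov
  -- maps of A and B over ℚ
  set A' : Matrix (Fin n) (Fin n) ℚ := A.map (Int.cast : ℤ → ℚ) with hA'def
  set B' : Matrix (Fin m) (Fin m) ℚ := B.map (Int.cast : ℤ → ℚ) with hB'def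
  have hA' : A'.IsUnitriangular := by
    constructor
    · intro k; simp [hA'def, Matrix.map_apply, hA.1 k]
    · intro k l hkl; simp [hA'def, Matrix.map_apply, hA.2 k l hkl]
  have hB' : B'.IsUnitriangular := by
    constructor
    · intro k; simp [hB'def, Matrix.map_apply, hB.1 k]
    · intro k l hkl; simp [hB'def, Matrix.map_apply, hB.2 k l hkl]
  have hdetA₀ : IsUnit A₀.det := by rw [unitri_det hA₀]; exact isUnit_one
  have hdetB₀ : IsUnit B₀.det := by rw [unitri_det hB₀]; exact isUnit_one
  have key : A' * (M.map (Int.cast : ℤ → ℚ)) * B'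
      = (A' * A₀⁻¹) * R * (B₀⁻¹ * B') := by
    have hM : M.map (Int.cast : ℤ → ℚ) = A₀⁻¹ * R * B₀⁻¹ := by
      rw [← hR]
      simp only [Matrix.mul_assoc]
      rw [Matrix.mul_nonsing_inv _ hdetB₀, Matrix.mul_one, ← Matrix.mul_assoc,
        Matrix.nonsing_inv_mul _ hdetA₀, Matrix.one_mul]
    rw [hM]
    simp only [Matrix.mul_assoc]
  have hcast : ((A * M * B) i j : ℚ) = (A' * (M.map (Int.cast : ℤ → ℚ)) * B') i j := by
    have : (A * M * B).map (Int.cast : ℤ → ℚ)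
        = A' * (M.map (Int.cast : ℤ → ℚ)) * B' := by
      have e1 : (A * M * B).map (Int.cast : ℤ → ℚ)
          = (A * M).map (Int.cast : ℤ → ℚ) * B.map (Int.cast : ℤ → ℚ) :=
        Matrix.map_mul (f := Int.castRingHom ℚ)
      have e2 : (A * M).map (Int.cast : ℤ → ℚ)
          = A.map (Int.cast : ℤ → ℚ) * M.map (Int.cast : ℤ → ℚ) :=
        Matrix.map_mul (f := Int.castRingHom ℚ)
      rw [e1, e2, hA'def, hB'def]
    calc ((A * M * B) i j : ℚ) = ((A * M * B).map (Int.cast : ℤ → ℚ)) i j := rfl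
      _ = _ := by rw [this]
  rw [hcast, key]
  exact core_lemma _ _ _ (unitri_mul_s5 hA' (unitri_inv hA₀)) (unitri_mul_s5 (unitri_inv hB₀) hB') i j hcov
end

section
/- Let M be a nonzero n×m matrix with integer entries, and let R be the rook matrix of M regarded as a matrix over ℚ. Then R has at least one nonzero entry which is an integer. -/
/-- If `M` is a nonzero integer matrix, then its rook matrix over `ℚ` has at least
one nonzero entry which is an integer. -/
theorem rook_matrix_has_integer_entry {n m : ℕ}
    (M : Matrix (Fin n) (Fin m) ℤ) (hM : M ≠ 0)
    (R : Matrix (Fin n) (Fin m) ℚ) (hRrook : R.IsRook)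
    (hRorb : ∃ (A : Matrix (Fin n) (Fin n) ℚ) (B : Matrix (Fin m) (Fin m) ℚ),
      A.IsUnitriangular ∧ B.IsUnitriangular ∧
      A * M.map (Int.cast : ℤ → ℚ) * B = R) :
    ∃ i j, R i j ≠ 0 ∧ ∃ z : ℤ, R i j = (z : ℚ) := by
  classical
  obtain ⟨A, B, hA, hB, hAB⟩ := hRorb
  have hMex : ∃ i j, M i j ≠ 0 := by
    by_contra h
    push_neg at h
    exact hM (by ext i j; simpa using h i j)
  set S : Finset (Fin n) := Finset.univ.filter (fun k => ∃ l, M k l ≠ 0) with hS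
  have hSne : S.Nonempty := by
    obtain ⟨i, j, hij⟩ := hMex
    exact ⟨i, by simp only [hS, Finset.mem_filter, Finset.mem_univ, true_and]; exact ⟨j, hij⟩⟩
  set i := S.max' hSne with hi
  have hiS : i ∈ S := S.max'_mem hSne
  have hrow : ∃ l, M i l ≠ 0 := by
    simpa only [hS, Finset.mem_filter, Finset.mem_univ, true_and] using hiS
  have hmax : ∀ k, i < k → ∀ l, M k l = 0 := by
    intro k hk l
    by_contra hne
    have hkS : k ∈ S := by
      simp only [hS, Finset.mem_filter, Finset.mem_univ, true_and]; exact ⟨l, hne⟩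
    exact absurd (S.le_max' k hkS) (not_le.2 hk)
  set T : Finset (Fin m) := Finset.univ.filter (fun l => M i l ≠ 0) with hT
  have hTne : T.Nonempty := by
    obtain ⟨l, hl⟩ := hrow
    exact ⟨l, by simp only [hT, Finset.mem_filter, Finset.mem_univ, true_and]; exact hl⟩
  set j := T.min' hTne with hj
  have hjT : j ∈ T := T.min'_mem hTne
  have hMij : M i j ≠ 0 := by
    simpa only [hT, Finset.mem_filter, Finset.mem_univ, true_and] using hjT
  have hmin : ∀ l : Fin m, l < j → M i l = 0 := by
    intro l hl
    by_contra hne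
    have : l ∈ T := by
      simp only [hT, Finset.mem_filter, Finset.mem_univ, true_and]; exact hne
    exact absurd (T.min'_le l this) (not_le.2 hl)
  have hinner : ∀ l, ((A * M.map (Int.cast : ℤ → ℚ)) i l) = (M i l : ℚ) := by
    intro l
    rw [Matrix.mul_apply]
    rw [Finset.sum_eq_single i]
    · rw [hA.1 i, Matrix.map_apply, one_mul]
    · intro k _ hk
      rcases lt_or_gt_of_ne hk with h | h
      · rw [hA.2 i k h, zero_mul]
      · rw [Matrix.map_apply, hmax k h l]; simp
    · simp
  have hval : R i j = (M i j : ℚ) := by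
    rw [← hAB, Matrix.mul_apply]
    rw [Finset.sum_congr rfl (fun l _ => by rw [hinner l])]
    rw [Finset.sum_eq_single j]
    · rw [hB.1 j, mul_one]
    · intro l _ hl
      rcases lt_or_gt_of_ne hl with h | h
      · rw [hmin l h]; simp
      · rw [hB.2 l j h, mul_zero]
    · simp
  exact ⟨i, j, by rw [hval]; exact_mod_cast hMij, M i j, hval⟩
end

section
/- Let M be a nonzero n×m matrix with integer entries. Then there exists a position (i,j) such that for all unitriangular integer matrices A ∈ T_n(ℤ) and B ∈ T_m(ℤ) one has (A·M·B)_{i,j} = M_{i,j}, and moreover M_{i,j} ≠ 0. In other words, some (nonzero) entry of M is the same for every matrix in the orbit of M under the action of T_n(ℤ) × T_m(ℤ). -/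
/-- Some nonzero entry of a nonzero integer matrix `M` is the same for every matrix
in the orbit of `M` under the action of `T_n(ℤ) × T_m(ℤ)`. -/
theorem exists_invariant_entry {n m : ℕ}
    (M : Matrix (Fin n) (Fin m) ℤ) (hM : M ≠ 0) :
    ∃ i j, M i j ≠ 0 ∧
      ∀ (A : Matrix (Fin n) (Fin n) ℤ) (B : Matrix (Fin m) (Fin m) ℤ),
        A.IsUnitriangular → B.IsUnitriangular → (A * M * B) i j = M i j := by
  have hex : ∃ i j, M i j ≠ 0 := by
    by_contra h
    push_neg at h
    exact hM (by ext i j; simpa using h i j)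
  obtain ⟨i0, j0, h0⟩ := hex
  classical
  let S : Finset (Fin n) := Finset.univ.filter (fun i => ∃ j, M i j ≠ 0)
  have hSne : S.Nonempty := ⟨i0, by simp [S]; exact ⟨j0, h0⟩⟩
  set i := S.max' hSne with hi_def
  have hiS : ∃ j, M i j ≠ 0 := by
    have := S.max'_mem hSne
    simpa [S] using this
  have hrow : ∀ k : Fin n, i < k → ∀ l, M k l = 0 := by
    intro k hk l
    by_contra hMkl
    have hkS : k ∈ S := by simp [S]; exact ⟨l, hMkl⟩
    exact absurd (S.le_max' k hkS) (not_le.mpr hk)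
  let T : Finset (Fin m) := Finset.univ.filter (fun j => M i j ≠ 0)
  obtain ⟨j1, hj1⟩ := hiS
  have hTne : T.Nonempty := ⟨j1, by simp [T]; exact hj1⟩
  set j := T.min' hTne with hj_def
  have hj : M i j ≠ 0 := by
    have := T.min'_mem hTne
    simpa [T] using this
  have hcol : ∀ l : Fin m, l < j → M i l = 0 := by
    intro l hl
    by_contra hMil
    have hlT : l ∈ T := by simp [T]; exact hMil
    exact absurd (T.min'_le l hlT) (not_le.mpr hl)
  refine ⟨i, j, hj, ?_⟩
  intro A B hA hB
  have inner : ∀ l, (A * M) i l = M i l := by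
    intro l
    rw [Matrix.mul_apply, Finset.sum_eq_single i]
    · rw [hA.1 i, one_mul]
    · intro k _ hk
      rcases lt_or_gt_of_ne hk with h | h
      · rw [hA.2 i k h, zero_mul]
      · rw [hrow k h l, mul_zero]
    · intro h; exact absurd (Finset.mem_univ i) h
  rw [Matrix.mul_apply, Finset.sum_eq_single j]
  · rw [inner j, hB.1 j, mul_one]
  · intro l _ hl
    rcases lt_or_gt_of_ne hl with h | h
    · rw [inner l, hcol l h, zero_mul]
    · rw [hB.2 l j h, mul_zero]
  · intro h; exact absurd (Finset.mem_univ j) h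
end

section
/- Let M be an n×m matrix with integer entries, and let R be the rook matrix of M regarded as a matrix over ℚ. If (i,j) is a position with R_{i,j} ≠ 0 which is not covered with respect to R, then R_{i,j} is an integer; in fact R_{i,j} = M_{i,j}. -/
private lemma unitri_aux {k : ℕ} (A : Matrix (Fin k) (Fin k) ℚ)
    (hA : (∀ i, A i i = 1) ∧ ∀ i j : Fin k, j < i → A i j = 0) :
    ((∀ i, A⁻¹ i i = 1) ∧ ∀ i j : Fin k, j < i → A⁻¹ i j = 0) ∧ IsUnit A.det := by
  have hBT : A.BlockTriangular id := fun i j h => hA.2 i j h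
  have hdet : A.det = 1 := by
    rw [Matrix.det_of_upperTriangular hBT]
    simp [hA.1]
  have hu : IsUnit A.det := by simp [hdet]
  haveI : Invertible A := A.invertibleOfIsUnitDet hu
  have hBT' : A⁻¹.BlockTriangular id := Matrix.blockTriangular_inv_of_blockTriangular hBT
  refine ⟨⟨fun i => ?_, fun i j h => hBT' h⟩, hu⟩
  have h1 : (A⁻¹ * A) i i = 1 := by rw [Matrix.nonsing_inv_mul A hu]; simp
  rw [Matrix.mul_apply] at h1
  rw [Finset.sum_eq_single i] at h1
  · simpa [hA.1 i] using h1
  · intro b _ hb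
    rcases lt_or_gt_of_ne hb with h | h
    · rw [hBT' h, zero_mul]
    · rw [hA.2 b i h, mul_zero]
  · simp

/-- A nonzero entry of the rook matrix (over `ℚ`) of an integer matrix `M` located at
a non-covered position is an integer; in fact it equals the corresponding entry of `M`. -/
theorem noncovered_rook_entry_eq_int {n m : ℕ}
    (M : Matrix (Fin n) (Fin m) ℤ) (R : Matrix (Fin n) (Fin m) ℚ)
    (hRrook : R.IsRook)
    (hRorb : ∃ (A : Matrix (Fin n) (Fin n) ℚ) (B : Matrix (Fin m) (Fin m) ℚ),
      A.IsUnitriangular ∧ B.IsUnitriangular ∧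
      A * M.map (Int.cast : ℤ → ℚ) * B = R)
    (i : Fin n) (j : Fin m) (hij : R i j ≠ 0) (hnc : ¬ R.Covered i j) :
    R i j = (M i j : ℚ) := by
  obtain ⟨A, B, hA, hB, hABR⟩ := hRorb
  obtain ⟨⟨hAid, hAit⟩, huA⟩ := unitri_aux A hA
  obtain ⟨⟨hBid, hBit⟩, huB⟩ := unitri_aux B hB
  have hM : M.map (Int.cast : ℤ → ℚ) = A⁻¹ * R * B⁻¹ := by
    rw [← hABR, ← Matrix.mul_assoc, ← Matrix.mul_assoc, Matrix.nonsing_inv_mul A huA,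
      Matrix.one_mul, Matrix.mul_assoc, Matrix.mul_nonsing_inv B huB, Matrix.mul_one]
  have key := congrFun (congrFun hM i) j
  rw [Matrix.mul_apply] at key
  simp only [Matrix.mul_apply] at key
  rw [Finset.sum_eq_single j] at key
  · rw [Finset.sum_eq_single i] at key
    · rw [hAid i, hBid j, one_mul, mul_one, Matrix.map_apply] at key
      exact key.symm
    · intro k _ hk
      rcases lt_or_gt_of_ne hk with h | h
      · rw [hAit i k h, zero_mul]
      · have hR0 : R k j = 0 := by
          by_contra hR
          exact hnc ⟨k, j, hR, Or.inl ⟨h, le_refl j⟩⟩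
        rw [hR0, mul_zero]
    · simp
  · intro l _ hl
    rcases lt_or_gt_of_ne hl with h | h
    · have : (∑ k, A⁻¹ i k * R k l) = 0 := by
        apply Finset.sum_eq_zero
        intro k _
        rcases lt_or_ge k i with hk | hk
        · rw [hAit i k hk, zero_mul]
        · have hR0 : R k l = 0 := by
            by_contra hR
            exact hnc ⟨k, l, hR, Or.inr ⟨hk, h⟩⟩
          rw [hR0, mul_zero]
      rw [this, zero_mul]
    · rw [hBit l j h, mul_zero]
  · simp
end

section
/- Let M be an n×m matrix with integer entries, let R be the rook matrix of M regarded as a matrix over ℚ, and let (i,j) be a position with R_{i,j} ≠ 0 which is not covered with respect to R. Then for all unitriangular integer matrices A ∈ T_n(ℤ) and B ∈ T_m(ℤ) one has (A·M·B)_{i,j} = R_{i,j}; in particular this entry is independent of A and B. -/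
private lemma key_aux {n m : ℕ} (A : Matrix (Fin n) (Fin n) ℚ) (B : Matrix (Fin m) (Fin m) ℚ)
    (M R : Matrix (Fin n) (Fin m) ℚ) (hA : A.IsUnitriangular) (hB : B.IsUnitriangular)
    (hABR : A * M * B = R) (i : Fin n) (j : Fin m)
    (hz : ∀ k l, i ≤ k → l ≤ j → ¬(k = i ∧ l = j) → R k l = 0) :
    ∀ k l, i ≤ k → l ≤ j → M k l = if k = i ∧ l = j then R i j else 0 := by
  suffices H : ∀ N (k : Fin n) (l : Fin m), (n - k.val) + l.val ≤ N → i ≤ k → l ≤ j →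
      M k l = if k = i ∧ l = j then R i j else 0 by
    intro k l hk hl; exact H _ k l le_rfl hk hl
  intro N
  induction N with
  | zero => intro k l hkl _ _; exact absurd hkl (by have := k.isLt; omega)
  | succ N ih =>
    intro k l hkl hik hlj
    have hRkl : (A * M * B) k l = M k l := by
      rw [Matrix.mul_apply]
      rw [Finset.sum_eq_single l]
      · rw [Matrix.mul_apply, Finset.sum_eq_single k]
        · rw [hA.1, hB.1, one_mul, mul_one]
        · intro k' _ hk'
          rcases lt_or_gt_of_ne hk' with h | h
          · simp [hA.2 k k' h]
          · have hM : M k' l = 0 := by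
              have hlt : k.val < k'.val := h
              have := ih k' l (by have := k'.isLt; omega)
                (le_of_lt (lt_of_le_of_lt hik h)) hlj
              rw [this, if_neg]
              rintro ⟨rfl, rfl⟩
              exact absurd h (not_lt.2 hik)
            simp [hM]
        · intro h; exact absurd (Finset.mem_univ k) h
      · intro l' _ hl'
        rcases lt_or_gt_of_ne hl' with h | h
        · have hzero : (A * M) k l' = 0 := by
            rw [Matrix.mul_apply]
            apply Finset.sum_eq_zero
            intro k' _
            rcases lt_or_ge k' k with h2 | h2
            · rw [hA.2 k k' h2, zero_mul]
            · have hM : M k' l' = 0 := by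
                have hlt : l'.val < l.val := h
                have hle : k.val ≤ k'.val := h2
                have := ih k' l' (by omega) (le_trans hik h2)
                  (le_of_lt (lt_of_lt_of_le h hlj))
                rw [this, if_neg]
                rintro ⟨rfl, rfl⟩
                exact absurd hlj (not_le.2 h)
              rw [hM, mul_zero]
          rw [hzero, zero_mul]
        · rw [hB.2 l' l h, mul_zero]
      · intro h; exact absurd (Finset.mem_univ l) h
    rw [hABR] at hRkl
    by_cases hkl' : k = i ∧ l = j
    · obtain ⟨rfl, rfl⟩ := hkl'
      rw [if_pos ⟨rfl, rfl⟩, ← hRkl]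
    · rw [if_neg hkl', ← hRkl, hz k l hik hlj hkl']

/-- At a non-covered position carrying a nonzero entry of the rook matrix `R` of an
integer matrix `M` over `ℚ`, every matrix `A * M * B` in the integral unitriangular
orbit of `M` has entry equal to that of `R`. -/
theorem noncovered_entry_invariant {n m : ℕ}
    (M : Matrix (Fin n) (Fin m) ℤ) (R : Matrix (Fin n) (Fin m) ℚ)
    (hRrook : R.IsRook)
    (hRorb : ∃ (A : Matrix (Fin n) (Fin n) ℚ) (B : Matrix (Fin m) (Fin m) ℚ),
      A.IsUnitriangular ∧ B.IsUnitriangular ∧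
      A * M.map (Int.cast : ℤ → ℚ) * B = R)
    (i : Fin n) (j : Fin m) (hij : R i j ≠ 0) (hnc : ¬ R.Covered i j) :
    ∀ (A : Matrix (Fin n) (Fin n) ℤ) (B : Matrix (Fin m) (Fin m) ℤ),
      A.IsUnitriangular → B.IsUnitriangular → ((A * M * B) i j : ℚ) = R i j := by
  obtain ⟨A₀, B₀, hA₀, hB₀, hR⟩ := hRorb
  have hz : ∀ k l, i ≤ k → l ≤ j → ¬(k = i ∧ l = j) → R k l = 0 := by
    intro k l hik hlj hne
    by_contra h0
    apply hnc
    refine ⟨k, l, h0, ?_⟩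
    rcases eq_or_lt_of_le hik with rfl | h
    · right
      exact ⟨le_rfl, lt_of_le_of_ne hlj (fun he => hne ⟨rfl, he⟩)⟩
    · left; exact ⟨h, hlj⟩
  have hM := key_aux A₀ B₀ (M.map (Int.cast : ℤ → ℚ)) R hA₀ hB₀ hR i j hz
  simp only [Matrix.map_apply] at hM
  intro A B hA hB
  have expand : ((A * M * B) i j : ℚ) = ∑ l, ∑ k, (A i k : ℚ) * (M k l : ℚ) * (B l j : ℚ) := by
    simp only [Matrix.mul_apply]
    push_cast
    simp [Finset.sum_mul]
  rw [expand, Finset.sum_eq_single j]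
  · rw [Finset.sum_eq_single i]
    · rw [hA.1, hB.1]
      push_cast
      rw [one_mul, mul_one]
      have := hM i j le_rfl le_rfl
      rwa [if_pos ⟨rfl, rfl⟩] at this
    · intro k _ hk
      rcases lt_or_gt_of_ne hk with h | h
      · rw [hA.2 i k h]; push_cast; ring
      · have := hM k j (le_of_lt h) le_rfl
        rw [if_neg (by rintro ⟨rfl, -⟩; exact lt_irrefl _ h)] at this
        rw [this]; ring
    · intro h; exact absurd (Finset.mem_univ i) h
  · intro l _ hl
    rcases lt_or_gt_of_ne hl with h | h
    · apply Finset.sum_eq_zero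
      intro k _
      rcases lt_or_ge k i with h2 | h2
      · rw [hA.2 i k h2]; push_cast; ring
      · have := hM k l h2 (le_of_lt h)
        rw [if_neg (by rintro ⟨-, rfl⟩; exact lt_irrefl _ h)] at this
        rw [this]; ring
    · apply Finset.sum_eq_zero
      intro k _
      rw [hB.2 l j h]; push_cast; ring
  · intro h; exact absurd (Finset.mem_univ j) h
end

section
/- (Classification of enhanced complexes, matrix form.) Let F be a field, let n ≥ 1 and let m_0, m_1, …, m_n be nonnegative integers. For each k ∈ {1, …, n} let D_k be an m_{k−1} × m_k matrix over F, and suppose that D_k · D_{k+1} = 0 for all k ∈ {1, …, n−1}. Then there exist unitriangular matrices P_k ∈ T_{m_k}(F) for k ∈ {0, …, n} such that P_{k−1} · D_k · P_k⁻¹ is a rook matrix for every k ∈ {1, …, n}. Moreover, these rook matrices are uniquely determined: P_{k−1} · D_k · P_k⁻¹ equals the rook matrix of D_k for each k, independently of the choice of the P_k. -/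
namespace RookAux

variable {F : Type*} [Field F]

lemma unitri_one {a : ℕ} : (1 : Matrix (Fin a) (Fin a) F).IsUnitriangular :=
  ⟨fun i => Matrix.one_apply_eq i, fun i j h => Matrix.one_apply_ne (ne_of_gt h)⟩

lemma unitri_mul {a : ℕ} {A B : Matrix (Fin a) (Fin a) F}
    (hA : A.IsUnitriangular) (hB : B.IsUnitriangular) : (A * B).IsUnitriangular := by
  constructor
  · intro i
    rw [Matrix.mul_apply]
    rw [Finset.sum_eq_single i]
    · rw [hA.1, hB.1, one_mul]
    · intro k _ hk
      rcases lt_or_gt_of_ne hk with h | h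
      · rw [hA.2 i k h, zero_mul]
      · rw [hB.2 k i h, mul_zero]
    · intro h; exact absurd (Finset.mem_univ i) h
  · intro i j hji
    rw [Matrix.mul_apply]
    apply Finset.sum_eq_zero
    intro k _
    rcases lt_or_ge k i with h | h
    · rw [hA.2 i k h, zero_mul]
    · rw [hB.2 k j (lt_of_lt_of_le hji h), mul_zero]

lemma unitri_det {a : ℕ} {A : Matrix (Fin a) (Fin a) F}
    (hA : A.IsUnitriangular) : A.det = 1 := by
  rw [Matrix.det_of_upperTriangular]
  · simp [hA.1]
  · intro i j h
    exact hA.2 i j h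

lemma unitri_isUnit_det {a : ℕ} {A : Matrix (Fin a) (Fin a) F}
    (hA : A.IsUnitriangular) : IsUnit A.det := by
  rw [unitri_det hA]; exact isUnit_one

lemma unitri_mul_inv {a : ℕ} {A : Matrix (Fin a) (Fin a) F}
    (hA : A.IsUnitriangular) : A * A⁻¹ = 1 :=
  Matrix.mul_nonsing_inv A (unitri_isUnit_det hA)

lemma unitri_inv_mul {a : ℕ} {A : Matrix (Fin a) (Fin a) F}
    (hA : A.IsUnitriangular) : A⁻¹ * A = 1 :=
  Matrix.nonsing_inv_mul A (unitri_isUnit_det hA)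

lemma unitri_inv {a : ℕ} {A : Matrix (Fin a) (Fin a) F}
    (hA : A.IsUnitriangular) : (A⁻¹).IsUnitriangular := by
  have hmul := unitri_mul_inv hA
  have key : ∀ d : ℕ, ∀ i j : Fin a, a - (i : ℕ) ≤ d → (j : ℕ) ≤ i →
      A⁻¹ i j = if i = j then 1 else 0 := by
    intro d
    induction d with
    | zero => intro i j h1 _; have := i.isLt; omega
    | succ d ih =>
      intro i j h1 hj
      have h2 : (1 : Matrix (Fin a) (Fin a) F) i j = ∑ k, A i k * A⁻¹ k j := by
        rw [← Matrix.mul_apply, hmul]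
      rw [Finset.sum_eq_single i] at h2
      · rw [hA.1, one_mul] at h2
        rw [← h2, Matrix.one_apply]
      · intro k _ hk
        rcases lt_or_gt_of_ne hk with h | h
        · rw [hA.2 i k h, zero_mul]
        · have hik : (i : ℕ) < (k : ℕ) := h
          have : A⁻¹ k j = if k = j then 1 else 0 := by
            apply ih k j <;> omega
          rw [this, if_neg, mul_zero]
          intro hkj
          subst hkj
          omega
      · intro h; exact absurd (Finset.mem_univ i) h
  constructor
  · intro i
    have := key a i i (by omega) (le_refl _)
    rwa [if_pos rfl] at this
  · intro i j h
    have := key a i j (by omega) (le_of_lt h)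
    rwa [if_neg (ne_of_gt h)] at this

lemma unitri_submatrix {a a' : ℕ} {A : Matrix (Fin a) (Fin a) F} {f : Fin a' → Fin a}
    (hf : StrictMono f) (hA : A.IsUnitriangular) :
    (A.submatrix f f).IsUnitriangular :=
  ⟨fun i => hA.1 (f i), fun i j h => hA.2 (f i) (f j) (hf h)⟩

lemma rook_submatrix {n m n' m' : ℕ} {R : Matrix (Fin n) (Fin m) F}
    {f : Fin n' → Fin n} {g : Fin m' → Fin m} (hf : Function.Injective f)
    (hg : Function.Injective g) (hR : R.IsRook) : (R.submatrix f g).IsRook :=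
  ⟨fun i j j' h1 h2 => hg (hR.1 (f i) (g j) (g j') h1 h2),
   fun i i' j h1 h2 => hf (hR.2 (f i) (f i') (g j) h1 h2)⟩

/-- Insert an identity row at `p` and identity column at `q` into a matrix. -/
def ins {a b : ℕ} (p : Fin (a + 1)) (q : Fin (b + 1)) (A : Matrix (Fin a) (Fin b) F) :
    Matrix (Fin (a + 1)) (Fin (b + 1)) F :=
  Matrix.of (p.insertNth (q.insertNth 1 (fun _ => 0)) (fun i' => q.insertNth 0 (A i')))

@[simp] lemma ins_pq {a b : ℕ} (p : Fin (a + 1)) (q : Fin (b + 1))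
    (A : Matrix (Fin a) (Fin b) F) : ins p q A p q = 1 := by
  simp [ins]

@[simp] lemma ins_p_sa {a b : ℕ} (p : Fin (a + 1)) (q : Fin (b + 1))
    (A : Matrix (Fin a) (Fin b) F) (j : Fin b) : ins p q A p (q.succAbove j) = 0 := by
  simp [ins]

@[simp] lemma ins_sa_q {a b : ℕ} (p : Fin (a + 1)) (q : Fin (b + 1))
    (A : Matrix (Fin a) (Fin b) F) (i : Fin a) : ins p q A (p.succAbove i) q = 0 := by
  simp [ins]

@[simp] lemma ins_sa_sa {a b : ℕ} (p : Fin (a + 1)) (q : Fin (b + 1))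
    (A : Matrix (Fin a) (Fin b) F) (i : Fin a) (j : Fin b) :
    ins p q A (p.succAbove i) (q.succAbove j) = A i j := by
  simp [ins]

lemma ins_unitri {a : ℕ} {p : Fin (a + 1)} {A : Matrix (Fin a) (Fin a) F}
    (hA : A.IsUnitriangular) : (ins p p A).IsUnitriangular := by
  constructor
  · intro i
    rcases eq_or_ne i p with rfl | h
    · simp
    · obtain ⟨i', rfl⟩ := Fin.exists_succAbove_eq h
      rw [ins_sa_sa]
      exact hA.1 i'
  · intro i j hji
    rcases eq_or_ne i p with rfl | hi
    · rcases eq_or_ne j i with rfl | hj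
      · exact absurd hji (lt_irrefl _)
      · obtain ⟨j', rfl⟩ := Fin.exists_succAbove_eq hj
        exact ins_p_sa _ _ A j'
    · obtain ⟨i', rfl⟩ := Fin.exists_succAbove_eq hi
      rcases eq_or_ne j p with rfl | hj
      · exact ins_sa_q _ _ A i'
      · obtain ⟨j', rfl⟩ := Fin.exists_succAbove_eq hj
        rw [ins_sa_sa]
        exact hA.2 i' j' (by rwa [Fin.succAbove_lt_succAbove_iff] at hji)

lemma ins_col {a b : ℕ} (p : Fin (a + 1)) (q : Fin (b + 1))
    (A : Matrix (Fin a) (Fin b) F) (i : Fin (a + 1)) :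
    ins p q A i q = if i = p then 1 else 0 := by
  rcases eq_or_ne i p with rfl | h
  · rw [if_pos rfl]; exact ins_pq _ _ _
  · obtain ⟨i', rfl⟩ := Fin.exists_succAbove_eq h
    rw [if_neg h]; exact ins_sa_q _ _ _ _

lemma ins_row {a b : ℕ} (p : Fin (a + 1)) (q : Fin (b + 1))
    (A : Matrix (Fin a) (Fin b) F) (j : Fin (b + 1)) :
    ins p q A p j = if j = q then 1 else 0 := by
  rcases eq_or_ne j q with rfl | h
  · rw [if_pos rfl]; exact ins_pq _ _ _
  · obtain ⟨j', rfl⟩ := Fin.exists_succAbove_eq h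
    rw [if_neg h]; exact ins_p_sa _ _ _ _

lemma rook_exists (b : ℕ) : ∀ (a : ℕ) (M : Matrix (Fin a) (Fin b) F),
    ∃ (A : Matrix (Fin a) (Fin a) F) (B : Matrix (Fin b) (Fin b) F), A.IsUnitriangular ∧ B.IsUnitriangular ∧ (A * M * B).IsRook ∧
      ∀ l, (∀ j, M l j = 0) → ∀ k, A l k = if l = k then (1:F) else 0 := by
  classical
  induction b with
  | zero =>
    intro a M
    refine ⟨1, 1, unitri_one, unitri_one, ⟨?_, ?_⟩, ?_⟩
    · intro i j; exact j.elim0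
    · intro i i' j; exact j.elim0
    · intro l _ k; exact Matrix.one_apply
  | succ b ih =>
    intro a M
    by_cases hcol : ∀ i, M i 0 = 0
    · -- first column zero
      obtain ⟨A, B', hA, hB', hrook, hcond⟩ := ih a (M.submatrix id (Fin.succAbove 0))
      refine ⟨A, ins 0 0 B', hA, ins_unitri hB', ?_, ?_⟩
      · -- rook
        set B := ins (0 : Fin (b+1)) (0 : Fin (b+1)) B' with hB
        have E0 : ∀ i, (A * M * B) i 0 = 0 := by
          intro i
          rw [Matrix.mul_apply, Fin.sum_univ_succAbove _ 0]
          have h1 : (A * M) i 0 * B 0 0 = 0 := by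
            have h2 : (A * M) i 0 = 0 := by
              rw [Matrix.mul_apply]
              exact Finset.sum_eq_zero fun k _ => by rw [hcol k, mul_zero]
            rw [h2, zero_mul]
          rw [h1, zero_add]
          exact Finset.sum_eq_zero fun l _ => by rw [hB, ins_sa_q, mul_zero]
        have Es : ∀ i j', (A * M * B) i ((0:Fin (b+1)).succAbove j') =
            (A * (M.submatrix id (Fin.succAbove 0)) * B') i j' := by
          intro i j'
          rw [Matrix.mul_apply, Fin.sum_univ_succAbove _ 0, hB]
          rw [ins_p_sa, mul_zero, zero_add, Matrix.mul_apply]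
          apply Finset.sum_congr rfl
          intro l _
          rw [ins_sa_sa]
          congr 1
        constructor
        · intro i j j' h1 h2
          have hj : j ≠ 0 := fun h => h1 (by rw [h, E0])
          have hj' : j' ≠ 0 := fun h => h2 (by rw [h, E0])
          obtain ⟨u, rfl⟩ := Fin.exists_succAbove_eq hj
          obtain ⟨v, rfl⟩ := Fin.exists_succAbove_eq hj'
          rw [Es] at h1 h2
          rw [hrook.1 i u v h1 h2]
        · intro i i' j h1 h2
          have hj : j ≠ 0 := fun h => h1 (by rw [h, E0])
          obtain ⟨u, rfl⟩ := Fin.exists_succAbove_eq hj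
          rw [Es] at h1 h2
          exact hrook.2 i i' u h1 h2
      · intro l hl k
        exact hcond l (fun j => by rw [Matrix.submatrix_apply, id, hl]) k
    · -- pivot in first column
      push_neg at hcol
      obtain ⟨i0, hi0⟩ := hcol
      cases a with
      | zero => exact i0.elim0
      | succ a' =>
        have hTne : (Finset.univ.filter (fun k => M k 0 ≠ 0)).Nonempty :=
          ⟨i0, Finset.mem_filter.2 ⟨Finset.mem_univ _, hi0⟩⟩
        set k0 := (Finset.univ.filter (fun k => M k 0 ≠ 0)).max' hTne with hk0def
        have hk0 : M k0 0 ≠ 0 :=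
          (Finset.mem_filter.1 ((Finset.univ.filter (fun k => M k 0 ≠ 0)).max'_mem hTne)).2
        have hmax : ∀ k, k0 < k → M k 0 = 0 := by
          intro k hk
          by_contra h
          exact absurd (Finset.le_max' _ k (Finset.mem_filter.2 ⟨Finset.mem_univ _, h⟩))
            (not_le.2 hk)
        set c := M k0 0 with hc
        set N : Matrix (Fin (a'+1)) (Fin (a'+1)) F :=
          Matrix.of (fun i j => if j = k0 ∧ i ≠ k0 then -(M i 0 / c) else 0) with hNdef
        set A1 : Matrix (Fin (a'+1)) (Fin (a'+1)) F := 1 + N with hA1def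
        set Rw : Matrix (Fin (b+1)) (Fin (b+1)) F :=
          Matrix.of (fun l j => if l = 0 ∧ j ≠ 0 then -(M k0 j / c) else 0) with hRwdef
        set B1 : Matrix (Fin (b+1)) (Fin (b+1)) F := 1 + Rw with hB1def
        have hA1u : A1.IsUnitriangular := by
          constructor
          · intro i
            rw [hA1def, Matrix.add_apply, Matrix.one_apply_eq]
            have h2 : N i i = 0 := by
              rw [hNdef, Matrix.of_apply, if_neg]
              rintro ⟨h1, h2⟩; exact h2 h1
            rw [h2, add_zero]
          · intro i j hji
            rw [hA1def, Matrix.add_apply, Matrix.one_apply_ne (ne_of_gt hji)]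
            rw [zero_add, hNdef, Matrix.of_apply]
            split_ifs with h
            · rw [hmax i (h.1 ▸ hji), zero_div, neg_zero]
            · rfl
        have hB1u : B1.IsUnitriangular := by
          constructor
          · intro l
            rw [hB1def, Matrix.add_apply, Matrix.one_apply_eq]
            have h2 : Rw l l = 0 := by
              rw [hRwdef, Matrix.of_apply, if_neg]
              rintro ⟨h1, h2⟩; exact h2 h1
            rw [h2, add_zero]
          · intro l j hjl
            rw [hB1def, Matrix.add_apply, Matrix.one_apply_ne (ne_of_gt hjl)]
            rw [zero_add, hRwdef, Matrix.of_apply, if_neg]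
            rintro ⟨h1, -⟩
            rw [h1] at hjl
            exact absurd hjl (Fin.not_lt_zero j)
        have hA1M : ∀ i q, (A1 * M) i q = M i q + N i k0 * M k0 q := by
          intro i q
          rw [hA1def, Matrix.add_mul, Matrix.one_mul, Matrix.add_apply]
          congr 1
          rw [Matrix.mul_apply]
          rw [Finset.sum_eq_single k0]
          · intro k _ hk
            have h2 : N i k = 0 := by
              rw [hNdef, Matrix.of_apply, if_neg]; rintro ⟨h1, -⟩; exact hk h1
            rw [h2, zero_mul]
          · intro h; exact absurd (Finset.mem_univ k0) h
        set M2 : Matrix (Fin (a'+1)) (Fin (b+1)) F := A1 * M * B1 with hM2def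
        have hM2 : ∀ i j, M2 i j = (A1 * M) i j + (A1 * M) i 0 * Rw 0 j := by
          intro i j
          rw [hM2def, hB1def, Matrix.mul_add, Matrix.mul_one, Matrix.add_apply]
          congr 1
          rw [Matrix.mul_apply]
          rw [Finset.sum_eq_single 0]
          · intro l _ hl
            have h2 : Rw l j = 0 := by
              rw [hRwdef, Matrix.of_apply, if_neg]; rintro ⟨h1, -⟩; exact hl h1
            rw [h2, mul_zero]
          · intro h; exact absurd (Finset.mem_univ 0) h
        have hNik0 : ∀ i, i ≠ k0 → N i k0 = -(M i 0 / c) := by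
          intro i h
          rw [hNdef, Matrix.of_apply, if_pos ⟨rfl, h⟩]
        have hNk0 : N k0 k0 = 0 := by
          rw [hNdef, Matrix.of_apply, if_neg]; rintro ⟨-, h⟩; exact h rfl
        have hRw00 : Rw 0 0 = 0 := by
          rw [hRwdef, Matrix.of_apply, if_neg]; rintro ⟨-, h⟩; exact h rfl
        have hRw0 : ∀ j, j ≠ 0 → Rw 0 j = -(M k0 j / c) := by
          intro j h
          rw [hRwdef, Matrix.of_apply, if_pos ⟨rfl, h⟩]
        have hM2col : ∀ i, M2 i 0 = if i = k0 then c else 0 := by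
          intro i
          rw [hM2 i 0, hRw00, mul_zero, add_zero, hA1M]
          rcases eq_or_ne i k0 with rfl | h
          · rw [hNk0, zero_mul, add_zero, if_pos rfl]
          · rw [if_neg h, hNik0 i h, ← hc, neg_mul, div_mul_cancel₀ _ hk0]
            exact add_neg_cancel _
        have hA1Mk0 : ∀ q, (A1 * M) k0 q = M k0 q := by
          intro q; rw [hA1M, hNk0, zero_mul, add_zero]
        have hM2row : ∀ j, M2 k0 j = if j = 0 then c else 0 := by
          intro j
          rcases eq_or_ne j 0 with rfl | h
          · rw [hM2, hRw00, mul_zero, add_zero, hA1Mk0, if_pos rfl]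
          · rw [hM2, hA1Mk0, hA1Mk0, hRw0 j h, if_neg h, ← hc]
            rw [mul_neg, mul_comm c, div_mul_cancel₀ _ hk0]
            exact add_neg_cancel _
        have hpres : ∀ l, (∀ j, M l j = 0) → ∀ j, M2 l j = 0 := by
          intro l hl j
          have hlk0 : l ≠ k0 := by
            intro h; apply hk0; rw [hc, ← h]; exact hl 0
          have h1 : ∀ q, (A1 * M) l q = 0 := by
            intro q
            rw [hA1M, hNik0 l hlk0, hl 0, zero_div, neg_zero, zero_mul, add_zero, hl]
          rw [hM2, h1, h1, zero_mul, add_zero]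
        have hA1row : ∀ l, M l 0 = 0 → ∀ j, A1 l j = if l = j then 1 else 0 := by
          intro l hl j
          rw [hA1def, Matrix.add_apply]
          have h2 : N l j = 0 := by
            rw [hNdef, Matrix.of_apply]
            split_ifs with h
            · rw [hl, zero_div, neg_zero]
            · rfl
          rw [h2, add_zero, Matrix.one_apply]
        obtain ⟨A'', B'', hA''u, hB''u, hrook'', hcond''⟩ :=
          ih a' (M2.submatrix (Fin.succAbove k0) (Fin.succAbove 0))
        set M2s := M2.submatrix (Fin.succAbove k0) (Fin.succAbove 0) with hM2s
        set A2 : Matrix (Fin (a'+1)) (Fin (a'+1)) F := ins k0 k0 A'' with hA2def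
        set B2 : Matrix (Fin (b+1)) (Fin (b+1)) F := ins 0 0 B'' with hB2def
        have hB2col : ∀ l, B2 l 0 = if l = 0 then 1 else 0 := fun l => ins_col _ _ _ l
        have hB2row : ∀ j, B2 0 j = if j = 0 then 1 else 0 := fun j => ins_row _ _ _ j
        have hA2col : ∀ i, A2 i k0 = if i = k0 then 1 else 0 := fun i => ins_col _ _ _ i
        have hA2row : ∀ k, A2 k0 k = if k = k0 then 1 else 0 := fun k => ins_row _ _ _ k
        refine ⟨A2 * A1, B1 * B2, unitri_mul (ins_unitri hA''u) hA1u,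
          unitri_mul hB1u (ins_unitri hB''u), ?_, ?_⟩
        · -- rook
          have hassoc : A2 * A1 * M * (B1 * B2) = A2 * M2 * B2 := by
            rw [hM2def]
            simp only [Matrix.mul_assoc]
          rw [hassoc]
          set N2 := A2 * M2 * B2 with hN2def
          have Ecol : ∀ i, N2 i 0 = if i = k0 then c else 0 := by
            intro i
            rw [hN2def, Matrix.mul_apply]
            rw [Finset.sum_eq_single 0]
            · rw [hB2col, if_pos rfl, mul_one, Matrix.mul_apply]
              rw [Finset.sum_eq_single k0]
              · rw [hM2col, if_pos rfl, hA2col]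
                split_ifs <;> simp
              · intro k _ hk
                rw [hM2col, if_neg hk, mul_zero]
              · intro h; exact absurd (Finset.mem_univ k0) h
            · intro l _ hl
              rw [hB2col, if_neg hl, mul_zero]
            · intro h; exact absurd (Finset.mem_univ 0) h
          have Erow : ∀ j, N2 k0 j = if j = 0 then c else 0 := by
            intro j
            have h1 : ∀ l, (A2 * M2) k0 l = M2 k0 l := by
              intro l
              rw [Matrix.mul_apply]
              rw [Finset.sum_eq_single k0]
              · rw [hA2row, if_pos rfl, one_mul]
              · intro k _ hk
                rw [hA2row, if_neg hk, zero_mul]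
              · intro h; exact absurd (Finset.mem_univ k0) h
            rw [hN2def, Matrix.mul_apply]
            rw [Finset.sum_eq_single 0]
            · rw [h1, hM2row, if_pos rfl, hB2row]
              split_ifs <;> simp
            · intro l _ hl
              rw [h1, hM2row, if_neg hl, zero_mul]
            · intro h; exact absurd (Finset.mem_univ 0) h
          have Esub : ∀ i' j', N2 (k0.succAbove i') ((0:Fin (b+1)).succAbove j') =
              (A'' * M2s * B'') i' j' := by
            intro i' j'
            rw [hN2def, hA2def, hB2def, Matrix.mul_apply, Fin.sum_univ_succAbove _ 0]
            rw [ins_p_sa, mul_zero, zero_add, Matrix.mul_apply]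
            apply Finset.sum_congr rfl
            intro l _
            rw [ins_sa_sa]
            congr 1
            rw [Matrix.mul_apply, Fin.sum_univ_succAbove _ k0]
            rw [ins_sa_q, zero_mul, zero_add, Matrix.mul_apply]
            apply Finset.sum_congr rfl
            intro k _
            rw [ins_sa_sa, hM2s, Matrix.submatrix_apply]
          constructor
          · intro i j j' h1 h2
            rcases eq_or_ne i k0 with rfl | hi
            · have hj : j = 0 := by
                by_contra h
                exact h1 (by rw [Erow, if_neg h])
              have hj' : j' = 0 := by
                by_contra h
                exact h2 (by rw [Erow, if_neg h])
              rw [hj, hj']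
            · obtain ⟨i', rfl⟩ := Fin.exists_succAbove_eq hi
              have hj : j ≠ 0 := by
                intro h
                apply h1
                rw [h, Ecol, if_neg (Fin.succAbove_ne k0 i')]
              have hj' : j' ≠ 0 := by
                intro h
                apply h2
                rw [h, Ecol, if_neg (Fin.succAbove_ne k0 i')]
              obtain ⟨u, rfl⟩ := Fin.exists_succAbove_eq hj
              obtain ⟨v, rfl⟩ := Fin.exists_succAbove_eq hj'
              rw [Esub] at h1 h2
              rw [hrook''.1 i' u v h1 h2]
          · intro i i' j h1 h2
            rcases eq_or_ne j 0 with rfl | hj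
            · have hi : i = k0 := by
                by_contra h
                exact h1 (by rw [Ecol, if_neg h])
              have hi' : i' = k0 := by
                by_contra h
                exact h2 (by rw [Ecol, if_neg h])
              rw [hi, hi']
            · obtain ⟨u, rfl⟩ := Fin.exists_succAbove_eq hj
              have hi : i ≠ k0 := by
                rintro rfl
                apply h1
                rw [Erow, if_neg (Fin.succAbove_ne (0 : Fin (b+1)) u)]
              have hi' : i' ≠ k0 := by
                rintro rfl
                apply h2
                rw [Erow, if_neg (Fin.succAbove_ne (0 : Fin (b+1)) u)]
              obtain ⟨v, rfl⟩ := Fin.exists_succAbove_eq hi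
              obtain ⟨w, rfl⟩ := Fin.exists_succAbove_eq hi'
              rw [Esub] at h1 h2
              rw [hrook''.2 v w u h1 h2]
        · -- row condition
          intro l hl k
          have hlk0 : l ≠ k0 := by
            intro h; apply hk0; rw [hc, ← h]; exact hl 0
          obtain ⟨l', rfl⟩ := Fin.exists_succAbove_eq hlk0
          have hM2l : ∀ j, M2 (k0.succAbove l') j = 0 := hpres _ hl
          have hsub : ∀ j'', M2s l' j'' = 0 := by
            intro j''
            rw [hM2s, Matrix.submatrix_apply, hM2l]
          have hA'' : ∀ k', A'' l' k' = if l' = k' then 1 else 0 := hcond'' l' hsub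
          have hA2l : ∀ t, A2 (k0.succAbove l') t = if k0.succAbove l' = t then 1 else 0 := by
            intro t
            rcases eq_or_ne t k0 with rfl | ht
            · rw [hA2col, if_neg (Fin.succAbove_ne k0 l')]
            · obtain ⟨t', rfl⟩ := Fin.exists_succAbove_eq ht
              rw [hA2def, ins_sa_sa, hA'']
              by_cases h : l' = t'
              · rw [if_pos h, if_pos (by rw [h])]
              · rw [if_neg h, if_neg (fun hc => h (Fin.succAbove_right_injective hc))]
          rw [Matrix.mul_apply]
          rw [Finset.sum_eq_single (k0.succAbove l')]
          · rw [hA2l, if_pos rfl, one_mul, hA1row _ (hl 0)]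
          · intro t _ ht
            rw [hA2l, if_neg (Ne.symm ht), zero_mul]
          · intro h; exact absurd (Finset.mem_univ _) h

lemma rook_unique (b : ℕ) : ∀ (a : ℕ) (R S U V : _)
    (hU : (U : Matrix (Fin a) (Fin a) F).IsUnitriangular)
    (hV : (V : Matrix (Fin b) (Fin b) F).IsUnitriangular)
    (hR : (R : Matrix (Fin a) (Fin b) F).IsRook) (hS : S.IsRook)
    (hSUV : S = U * R * V), S = R := by
  induction b with
  | zero =>
    intro a R S U V _ _ _ _ _
    funext i j
    exact j.elim0
  | succ b ih =>
    intro a R S U V hU hV hR hS hSUV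
    have hV00 : ∀ l : Fin (b+1), V l 0 = if l = 0 then 1 else 0 := by
      intro l
      rcases eq_or_ne l 0 with rfl | h
      · rw [if_pos rfl]; exact hV.1 0
      · rw [if_neg h]; exact hV.2 l 0 (Fin.pos_of_ne_zero h)
    have hScol : ∀ i, S i 0 = ∑ k, U i k * R k 0 := by
      intro i
      rw [hSUV, Matrix.mul_apply]
      rw [Finset.sum_eq_single 0]
      · rw [hV00, if_pos rfl, mul_one, Matrix.mul_apply]
      · intro l _ hl
        rw [hV00, if_neg hl, mul_zero]
      · intro h; exact absurd (Finset.mem_univ _) h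
    by_cases hc : ∀ k, R k 0 = 0
    · -- first column of R is zero
      have hS0 : ∀ i, S i 0 = 0 := by
        intro i
        rw [hScol]
        exact Finset.sum_eq_zero fun k _ => by rw [hc, mul_zero]
      have key : S.submatrix id (Fin.succAbove 0) =
          R.submatrix id (Fin.succAbove 0) := by
        apply ih a _ _ U (V.submatrix (Fin.succAbove 0) (Fin.succAbove 0)) hU
          (unitri_submatrix (Fin.strictMono_succAbove 0) hV)
          (rook_submatrix Function.injective_id Fin.succAbove_right_injective hR)
          (rook_submatrix Function.injective_id Fin.succAbove_right_injective hS)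
        funext i j'
        rw [Matrix.submatrix_apply, hSUV, Matrix.mul_apply, Fin.sum_univ_succAbove _ 0]
        have h1 : (U * R) i 0 = 0 := by
          rw [Matrix.mul_apply]
          exact Finset.sum_eq_zero fun k _ => by rw [hc, mul_zero]
        simp only [id_eq]
        rw [h1, zero_mul, zero_add, Matrix.mul_apply]
        exact Finset.sum_congr rfl fun l _ => rfl
      funext i j
      rcases eq_or_ne j 0 with rfl | h
      · rw [hS0, hc]
      · obtain ⟨j', rfl⟩ := Fin.exists_succAbove_eq h
        have := congrFun (congrFun key i) j'
        rwa [Matrix.submatrix_apply, Matrix.submatrix_apply, id] at this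
    · -- R has a pivot in column 0
      push_neg at hc
      obtain ⟨k0, hk0⟩ := hc
      cases a with
      | zero => exact k0.elim0
      | succ a' =>
        have hcol : ∀ k, k ≠ k0 → R k 0 = 0 := by
          intro k hk
          by_contra h
          exact hk (hR.2 k k0 0 h hk0)
        have hScol' : ∀ i, S i 0 = U i k0 * R k0 0 := by
          intro i
          rw [hScol]
          rw [Finset.sum_eq_single k0]
          · intro k _ hk
            rw [hcol k hk, mul_zero]
          · intro h; exact absurd (Finset.mem_univ _) h
        have hSk00 : S k0 0 = R k0 0 := by
          rw [hScol', hU.1, one_mul]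
        have hUcol : ∀ i, i ≠ k0 → U i k0 = 0 := by
          intro i hi
          have hSi0 : S i 0 = 0 := by
            by_contra h
            exact hi (hS.2 i k0 0 h (by rwa [hSk00]))
          have := hScol' i
          rw [hSi0] at this
          rcases mul_eq_zero.1 this.symm with h | h
          · exact h
          · exact absurd h hk0
        have hRrow : ∀ j, j ≠ 0 → R k0 j = 0 := by
          intro j hj
          by_contra h
          exact hj (hR.1 k0 j 0 h hk0)
        have hSrow : ∀ j, j ≠ 0 → S k0 j = 0 := by
          intro j hj
          by_contra h
          exact hj (hS.1 k0 j 0 h (by rwa [hSk00]))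
        have key : S.submatrix (Fin.succAbove k0) (Fin.succAbove 0) =
            R.submatrix (Fin.succAbove k0) (Fin.succAbove 0) := by
          apply ih a' _ _ (U.submatrix (Fin.succAbove k0) (Fin.succAbove k0))
            (V.submatrix (Fin.succAbove 0) (Fin.succAbove 0))
            (unitri_submatrix (Fin.strictMono_succAbove k0) hU)
            (unitri_submatrix (Fin.strictMono_succAbove 0) hV)
            (rook_submatrix Fin.succAbove_right_injective
              Fin.succAbove_right_injective hR)
            (rook_submatrix Fin.succAbove_right_injective
              Fin.succAbove_right_injective hS)
          funext i' j'
          rw [Matrix.submatrix_apply, hSUV, Matrix.mul_apply, Fin.sum_univ_succAbove _ 0]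
          have h1 : (U * R) (k0.succAbove i') 0 = 0 := by
            rw [Matrix.mul_apply]
            rw [Finset.sum_eq_single k0]
            · rw [hUcol _ (Fin.succAbove_ne k0 i'), zero_mul]
            · intro k _ hk
              rw [hcol k hk, mul_zero]
            · intro h; exact absurd (Finset.mem_univ _) h
          rw [h1, zero_mul, zero_add, Matrix.mul_apply]
          refine Finset.sum_congr rfl fun l _ => ?_
          rw [Matrix.submatrix_apply]
          congr 1
          rw [Matrix.mul_apply, Fin.sum_univ_succAbove _ k0]
          rw [hUcol _ (Fin.succAbove_ne k0 i'), zero_mul, zero_add, Matrix.mul_apply]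
          exact Finset.sum_congr rfl fun k _ => rfl
        funext i j
        rcases eq_or_ne i k0 with rfl | hi
        · rcases eq_or_ne j 0 with rfl | hj
          · exact hSk00
          · rw [hSrow j hj, hRrow j hj]
        · rcases eq_or_ne j 0 with rfl | hj
          · rw [hScol' i, hUcol i hi, zero_mul, hcol i hi]
          · obtain ⟨i', rfl⟩ := Fin.exists_succAbove_eq hi
            obtain ⟨j', rfl⟩ := Fin.exists_succAbove_eq hj
            have := congrFun (congrFun key i') j'
            rwa [Matrix.submatrix_apply, Matrix.submatrix_apply] at this

lemma rook_unique' {a b : ℕ} (M : Matrix (Fin a) (Fin b) F) {A B A' B' : _}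
    (hA : (A : Matrix (Fin a) (Fin a) F).IsUnitriangular)
    (hB : (B : Matrix (Fin b) (Fin b) F).IsUnitriangular)
    (hA' : (A' : Matrix (Fin a) (Fin a) F).IsUnitriangular)
    (hB' : (B' : Matrix (Fin b) (Fin b) F).IsUnitriangular)
    (h1 : (A * M * B).IsRook) (h2 : (A' * M * B').IsRook) :
    A * M * B = A' * M * B' := by
  apply rook_unique b a (A' * M * B') (A * M * B) (A * A'⁻¹) (B'⁻¹ * B)
    (unitri_mul hA (unitri_inv hA')) (unitri_mul (unitri_inv hB') hB) h2 h1
  have e : A * A'⁻¹ * (A' * M * B') * (B'⁻¹ * B) =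
      A * (A'⁻¹ * (A' * (M * (B' * (B'⁻¹ * B))))) := by
    simp only [Matrix.mul_assoc]
  rw [e, Matrix.nonsing_inv_mul_cancel_left _ _ (unitri_isUnit_det hA'),
    Matrix.mul_nonsing_inv_cancel_left _ _ (unitri_isUnit_det hB')]
  simp only [Matrix.mul_assoc]

lemma exists_aux (m : ℕ → ℕ) (D : ∀ k : ℕ, Matrix (Fin (m k)) (Fin (m (k + 1))) F) :
    ∀ N : ℕ, (∀ k, k + 1 < N → D k * D (k + 1) = 0) →
    ∃ P : ∀ k : ℕ, Matrix (Fin (m k)) (Fin (m k)) F,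
      (∀ k, (P k).IsUnitriangular) ∧
      (∀ k, k < N → (P k * D k * (P (k + 1))⁻¹).IsRook) := by
  intro N
  induction N with
  | zero =>
    intro _
    exact ⟨fun _ => 1, fun _ => unitri_one, fun k h => absurd h (Nat.not_lt_zero k)⟩
  | succ N ih =>
    intro hD
    obtain ⟨P, hPu, hProok⟩ := ih (fun k h => hD k (Nat.lt_succ_of_lt h))
    obtain ⟨A, B, hAu, hBu, hABrook, hAcond⟩ := rook_exists (m (N + 1)) (m N) (P N * D N)
    classical
    set P' : ∀ k : ℕ, Matrix (Fin (m k)) (Fin (m k)) F :=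
      Function.update (Function.update P N (A * P N)) (N + 1) B⁻¹ with hP'def
    have hP'_other : ∀ k, k ≠ N → k ≠ N + 1 → P' k = P k := by
      intro k h1 h2
      rw [hP'def, Function.update_of_ne h2, Function.update_of_ne h1]
    have hP'_N : P' N = A * P N := by
      rw [hP'def, Function.update_of_ne (by omega), Function.update_self]
    have hP'_N1 : P' (N + 1) = B⁻¹ := by
      rw [hP'def, Function.update_self]
    refine ⟨P', ?_, ?_⟩
    · intro k
      rcases eq_or_ne k N with rfl | h1
      · rw [hP'_N]; exact unitri_mul hAu (hPu k)
      · rcases eq_or_ne k (N + 1) with rfl | h2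
        · rw [hP'_N1]; exact unitri_inv hBu
        · rw [hP'_other k h1 h2]; exact hPu k
    · intro k hk
      rcases eq_or_ne k N with rfl | h1
      · -- the new rook matrix
        rw [hP'_N, hP'_N1, Matrix.nonsing_inv_nonsing_inv B (unitri_isUnit_det hBu)]
        have e : A * P k * D k * B = A * (P k * D k) * B := by
          simp only [Matrix.mul_assoc]
        rw [e]
        exact hABrook
      · have hkN : k < N := by omega
        rcases eq_or_ne (k + 1) N with hk1 | h2
        · -- k + 1 = N : must check the old rook matrix is unchanged
          subst hk1
          rw [hP'_other k (by omega) (by omega), hP'_N]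
          set R := P k * D k * (P (k + 1))⁻¹ with hRdef
          have hRrook : R.IsRook := hProok k hkN
          have hDk : D k * D (k + 1) = 0 := hD k (by omega)
          set M := P (k + 1) * D (k + 1) with hMdef
          have hRM : R * M = 0 := by
            have e : R * M = P k * (D k * D (k + 1)) := by
              rw [hRdef, hMdef]
              have e2 : P k * D k * (P (k + 1))⁻¹ * (P (k + 1) * D (k + 1)) =
                  P k * (D k * ((P (k + 1))⁻¹ * (P (k + 1) * D (k + 1)))) := by
                simp only [Matrix.mul_assoc]
              rw [e2, Matrix.nonsing_inv_mul_cancel_left _ _ (unitri_isUnit_det (hPu (k + 1)))]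
            rw [e, hDk, Matrix.mul_zero]
          have hrowM : ∀ l, (∃ i, R i l ≠ 0) → ∀ q, M l q = 0 := by
            rintro l ⟨i, hil⟩ q
            have h0 : (R * M) i q = 0 := by rw [hRM]; exact Matrix.zero_apply i q
            rw [Matrix.mul_apply] at h0
            rw [Finset.sum_eq_single l] at h0
            · rcases mul_eq_zero.1 h0 with h | h
              · exact absurd h hil
              · exact h
            · intro t _ ht
              have : R i t = 0 := by
                by_contra hc
                exact ht (hRrook.1 i t l hc hil)
              rw [this, zero_mul]
            · intro h; exact absurd (Finset.mem_univ _) h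
          have hAinvrow : ∀ l, (∃ i, R i l ≠ 0) → ∀ j,
              A⁻¹ l j = if l = j then 1 else 0 := by
            intro l hl j
            have hrowA : ∀ t, A l t = if l = t then 1 else 0 :=
              hAcond l (hrowM l hl)
            have h1 : (1 : Matrix (Fin (m (k + 1))) (Fin (m (k + 1))) F) l j =
                ∑ t, A l t * A⁻¹ t j := by
              rw [← Matrix.mul_apply, unitri_mul_inv hAu]
            rw [Finset.sum_eq_single l] at h1
            · rw [hrowA, if_pos rfl, one_mul] at h1
              rw [← h1, Matrix.one_apply]
            · intro t _ ht
              rw [hrowA, if_neg (Ne.symm ht), zero_mul]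
            · intro h; exact absurd (Finset.mem_univ _) h
          have hRA : R * A⁻¹ = R := by
            funext i j
            rw [Matrix.mul_apply]
            have e : ∀ l, R i l * A⁻¹ l j = R i l * (if l = j then 1 else 0) := by
              intro l
              rcases eq_or_ne (R i l) 0 with h | h
              · rw [h, zero_mul, zero_mul]
              · rw [hAinvrow l ⟨i, h⟩ j]
            rw [Finset.sum_congr rfl fun l _ => e l]
            rw [Finset.sum_eq_single j]
            · rw [if_pos rfl, mul_one]
            · intro t _ ht
              rw [if_neg ht, mul_zero]
            · intro h; exact absurd (Finset.mem_univ _) h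
          have egoal : P k * D k * (A * P (k + 1))⁻¹ = R * A⁻¹ := by
            rw [Matrix.mul_inv_rev, hRdef, Matrix.mul_assoc (P k * D k)]
          rw [egoal, hRA]
          exact hRrook
        · -- untouched rook matrices
          rw [hP'_other k h1 (by omega), hP'_other (k + 1) h2 (by omega)]
          exact hProok k hkN

end RookAux

/-- Classification of enhanced complexes, matrix form. The differentials `D k`
(of size `m k × m (k+1)`, indexed here by `k = 0, …, n-1`, with `D k * D (k+1) = 0`)
can be simultaneously put in rook form by unitriangular base changes
`P k ∈ T_{m k}(F)`, `k = 0, …, n`; and the resulting rook matrices are uniquely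
determined, independently of the choice of the `P k`. -/
theorem classification_of_enhanced_complexes {F : Type*} [Field F]
    {n : ℕ} (hn : 1 ≤ n) (m : ℕ → ℕ)
    (D : ∀ k : ℕ, Matrix (Fin (m k)) (Fin (m (k + 1))) F)
    (hD : ∀ k, k + 1 < n → D k * D (k + 1) = 0) :
    ∃ P : ∀ k : ℕ, Matrix (Fin (m k)) (Fin (m k)) F,
      (∀ k, k ≤ n → (P k).IsUnitriangular) ∧
      (∀ k, k < n → (P k * D k * (P (k + 1))⁻¹).IsRook) ∧
      ∀ Q : ∀ k : ℕ, Matrix (Fin (m k)) (Fin (m k)) F,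
        (∀ k, k ≤ n → (Q k).IsUnitriangular) →
        (∀ k, k < n → (Q k * D k * (Q (k + 1))⁻¹).IsRook) →
        ∀ k, k < n → Q k * D k * (Q (k + 1))⁻¹ = P k * D k * (P (k + 1))⁻¹ := by
  obtain ⟨P, hPu, hProok⟩ := RookAux.exists_aux m D n hD
  refine ⟨P, fun k _ => hPu k, hProok, ?_⟩
  intro Q hQu hQrook k hk
  exact RookAux.rook_unique' (D k) (hQu k (le_of_lt hk))
    (RookAux.unitri_inv (hQu (k + 1) hk))
    (hPu k) (RookAux.unitri_inv (hPu (k + 1)))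
    (hQrook k hk) (hProok k hk)
end

section
/- Let F be a field, let n ≥ 2 and let m_0, m_1, …, m_n be nonnegative integers. For each k ∈ {1, …, n} let D_k be an m_{k−1} × m_k matrix over F, and suppose that D_k · D_{k+1} = 0 for all k ∈ {1, …, n−1}. Let R_k denote the rook matrix of D_k. Then R_k · R_{k+1} = 0 for all k ∈ {1, …, n−1}; that is, the rook matrices of the differentials of a chain complex again form the differentials of a chain complex. -/
open Matrix

lemma Matrix.IsUnitriangular.blockTriangular {n : ℕ} {F : Type*} [CommRing F]
    {A : Matrix (Fin n) (Fin n) F} (hA : A.IsUnitriangular) :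
    A.BlockTriangular id := fun i j h => hA.2 i j h

lemma Matrix.IsUnitriangular.det_eq_one {n : ℕ} {F : Type*} [CommRing F]
    {A : Matrix (Fin n) (Fin n) F} (hA : A.IsUnitriangular) : A.det = 1 := by
  rw [Matrix.det_of_upperTriangular hA.blockTriangular]
  simp [hA.1]

lemma Matrix.IsUnitriangular.inv {n : ℕ} {F : Type*} [Field F]
    {A : Matrix (Fin n) (Fin n) F} (hA : A.IsUnitriangular) : A⁻¹.IsUnitriangular := by
  have hu : IsUnit A.det := by rw [hA.det_eq_one]; exact isUnit_one
  haveI : Invertible A := A.invertibleOfIsUnitDet hu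
  have htri : A⁻¹.BlockTriangular id :=
    Matrix.blockTriangular_inv_of_blockTriangular hA.blockTriangular
  refine ⟨fun l => ?_, fun i j h => htri h⟩
  have h1 : A * A⁻¹ = 1 := Matrix.mul_nonsing_inv A hu
  have h2 : (A * A⁻¹) l l = 1 := by rw [h1]; simp
  rw [Matrix.mul_apply] at h2
  rw [Finset.sum_eq_single l] at h2
  · rwa [hA.1 l, one_mul] at h2
  · intro q _ hq
    rcases lt_or_gt_of_ne hq with hlt | hgt
    · rw [hA.2 l q hlt, zero_mul]
    · rw [htri (show (id l : Fin n) < id q from hgt), mul_zero]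
  · intro h; exact absurd (Finset.mem_univ l) h

/-- The rook matrices of the differentials of a chain complex again form the
differentials of a chain complex: if `D k * D (k+1) = 0` then the corresponding
rook matrices satisfy `R k * R (k+1) = 0`. (Differentials are indexed here by
`k = 0, …, n-1`, `D k` of size `m k × m (k+1)`.) -/
theorem rook_matrices_form_complex {F : Type*} [Field F]
    {n : ℕ} (hn : 2 ≤ n) (m : ℕ → ℕ)
    (D R : ∀ k : ℕ, Matrix (Fin (m k)) (Fin (m (k + 1))) F)
    (hD : ∀ k, k + 1 < n → D k * D (k + 1) = 0)
    (hRrook : ∀ k, k < n → (R k).IsRook)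
    (hRorb : ∀ k, k < n →
      ∃ (A : Matrix (Fin (m k)) (Fin (m k)) F)
        (B : Matrix (Fin (m (k + 1))) (Fin (m (k + 1))) F),
        A.IsUnitriangular ∧ B.IsUnitriangular ∧ A * D k * B = R k) :
    ∀ k, k + 1 < n → R k * R (k + 1) = 0 := by
  intro k hk1
  have hk : k < n := Nat.lt_of_succ_lt hk1
  obtain ⟨A, B, hA, hB, hABk⟩ := hRorb k hk
  obtain ⟨A', B', hA', hB', hABk1⟩ := hRorb (k + 1) hk1
  have hAu : IsUnit A.det := by rw [hA.det_eq_one]; exact isUnit_one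
  have hBu : IsUnit B.det := by rw [hB.det_eq_one]; exact isUnit_one
  have hA'u : IsUnit A'.det := by rw [hA'.det_eq_one]; exact isUnit_one
  ext i j
  rw [Matrix.mul_apply, Matrix.zero_apply]
  refine Finset.sum_eq_zero fun l _ => ?_
  by_contra hne
  have h1 : R k i l ≠ 0 := fun h => hne (by rw [h, zero_mul])
  have h2 : R (k + 1) l j ≠ 0 := fun h => hne (by rw [h, mul_zero])
  -- the vector c = A'⁻¹ applied to column j of R (k+1)
  set c : Fin (m (k + 1)) → F := A'⁻¹ *ᵥ (fun p => R (k + 1) p j) with hc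
  have hcval : ∀ p, c p = A'⁻¹ p l * R (k + 1) l j := by
    intro p
    rw [hc, Matrix.mulVec, dotProduct, Finset.sum_eq_single l]
    · intro q _ hq
      have : R (k + 1) q j = 0 := by
        by_contra hq0
        exact hq ((hRrook (k + 1) hk1).2 q l j hq0 h2)
      rw [this, mul_zero]
    · intro h; exact absurd (Finset.mem_univ l) h
  have hcl : c l = R (k + 1) l j := by rw [hcval l, hA'.inv.1 l, one_mul]
  have hchigh : ∀ p, l < p → c p = 0 := by
    intro p hp
    rw [hcval p, hA'.inv.2 p l hp, zero_mul]
  -- c is in the image of D (k+1)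
  have hcim : c = D (k + 1) *ᵥ (B' *ᵥ Pi.single j 1) := by
    have hAR : A'⁻¹ * R (k + 1) = D (k + 1) * B' := by
      rw [← hABk1, ← Matrix.mul_assoc, ← Matrix.mul_assoc,
        Matrix.nonsing_inv_mul A' hA'u, Matrix.one_mul]
    have hcol : (fun p => R (k + 1) p j) = R (k + 1) *ᵥ Pi.single j 1 := by
      funext p
      rw [Matrix.mulVec_single]
      simp
    rw [hc, hcol, Matrix.mulVec_mulVec, hAR, ← Matrix.mulVec_mulVec]
  -- hence D k *ᵥ c = 0
  have hDc : D k *ᵥ c = 0 := by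
    rw [hcim, Matrix.mulVec_mulVec, hD k hk1, Matrix.zero_mulVec]
  -- transfer along B : w = B⁻¹ *ᵥ c satisfies R k *ᵥ w = 0 and w l = c l
  set w : Fin (m (k + 1)) → F := B⁻¹ *ᵥ c with hw
  have hRw : R k *ᵥ w = 0 := by
    rw [hw, ← hABk, Matrix.mulVec_mulVec, Matrix.mul_assoc (A * D k),
      Matrix.mul_nonsing_inv B hBu, Matrix.mul_one, ← Matrix.mulVec_mulVec, hDc,
      Matrix.mulVec_zero]
  have hwl : w l = c l := by
    rw [hw, Matrix.mulVec, dotProduct, Finset.sum_eq_single l]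
    · rw [hB.inv.1 l, one_mul]
    · intro q _ hq
      rcases lt_or_gt_of_ne hq with hlt | hgt
      · rw [hB.inv.2 l q hlt, zero_mul]
      · rw [hchigh q hgt, mul_zero]
    · intro h; exact absurd (Finset.mem_univ l) h
  -- but row i of R k *ᵥ w is R k i l * w l ≠ 0
  have hrow : (R k *ᵥ w) i = R k i l * w l := by
    rw [Matrix.mulVec, dotProduct, Finset.sum_eq_single l]
    · intro q _ hq
      have : R k i q = 0 := by
        by_contra hq0
        exact hq ((hRrook k hk).1 i q l hq0 h1)
      rw [this, zero_mul]
    · intro h; exact absurd (Finset.mem_univ l) h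
  have : R k i l * w l = 0 := by rw [← hrow, hRw]; rfl
  rw [hwl, hcl] at this
  exact hne this
end

section
/- Let φ : F → K be a homomorphism of fields, let M be an n×m matrix over F, and let R be the rook matrix of M over F. Then the rook matrix over K of the matrix obtained from M by applying φ to every entry equals the matrix obtained from R by applying φ to every entry. (The rook matrix is unchanged under extension of the base field.) -/
namespace RookAux

open Matrix Finset

variable {K : Type*} [Field K] {n m : ℕ}

lemma uni_bt {A : Matrix (Fin n) (Fin n) K} (hA : A.IsUnitriangular) :
    A.BlockTriangular id := fun i j h => hA.2 i j h

lemma uni_det {A : Matrix (Fin n) (Fin n) K} (hA : A.IsUnitriangular) :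
    A.det = 1 := by
  rw [Matrix.det_of_upperTriangular (uni_bt hA)]
  simp [hA.1]

lemma uni_mul {A B : Matrix (Fin n) (Fin n) K} (hA : A.IsUnitriangular)
    (hB : B.IsUnitriangular) : (A * B).IsUnitriangular := by
  constructor
  · intro i
    rw [Matrix.mul_apply]
    rw [Finset.sum_eq_single i]
    · simp [hA.1, hB.1]
    · intro k _ hk
      rcases lt_or_gt_of_ne hk with h | h
      · rw [hA.2 i k h, zero_mul]
      · rw [hB.2 k i h, mul_zero]
    · simp
  · intro i j hji
    rw [Matrix.mul_apply]
    apply Finset.sum_eq_zero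
    intro k _
    rcases lt_or_ge k i with h | h
    · rw [hA.2 i k h, zero_mul]
    · rw [hB.2 k j (lt_of_lt_of_le hji h), mul_zero]

lemma uni_inv {A : Matrix (Fin n) (Fin n) K} (hA : A.IsUnitriangular) :
    A⁻¹.IsUnitriangular := by
  have hdet : IsUnit A.det := by rw [uni_det hA]; exact isUnit_one
  haveI : Invertible A := A.invertibleOfIsUnitDet hdet
  have hbt : A⁻¹.BlockTriangular id :=
    Matrix.blockTriangular_inv_of_blockTriangular (uni_bt hA)
  refine ⟨?_, fun i j h => hbt h⟩
  intro i
  have h1 : (A⁻¹ * A) i i = 1 := by rw [Matrix.nonsing_inv_mul A hdet]; simp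
  rw [Matrix.mul_apply] at h1
  rw [Finset.sum_eq_single i] at h1
  · rwa [hA.1 i, mul_one] at h1
  · intro k _ hk
    rcases lt_or_gt_of_ne hk with h | h
    · rw [hbt (show id k < id i from h), zero_mul]
    · rw [hA.2 k i h, mul_zero]
  · simp

lemma uni_map {F : Type*} [Field F] (φ : F →+* K) {A : Matrix (Fin n) (Fin n) F}
    (hA : A.IsUnitriangular) : (A.map φ).IsUnitriangular := by
  refine ⟨fun i => ?_, fun i j h => ?_⟩
  · simp [Matrix.map_apply, hA.1 i]
  · simp [Matrix.map_apply, hA.2 i j h]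

lemma rook_map {F : Type*} [Field F] (φ : F →+* K) {R : Matrix (Fin n) (Fin m) F}
    (hR : R.IsRook) : (R.map φ).IsRook := by
  have hφ : Function.Injective φ := φ.injective
  have key : ∀ (x : F), φ x ≠ 0 → x ≠ 0 := by
    intro x h hx; exact h (by rw [hx, map_zero])
  exact ⟨fun i j j' h h' => hR.1 i j j' (key _ h) (key _ h'),
    fun i i' j h h' => hR.2 i i' j (key _ h) (key _ h')⟩

/-- Uniqueness of the rook matrix in a unitriangular orbit. -/
lemma rook_unique_s14 {U : Matrix (Fin n) (Fin n) K} {V : Matrix (Fin m) (Fin m) K}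
    {R1 R2 : Matrix (Fin n) (Fin m) K} (hU : U.IsUnitriangular)
    (hV : V.IsUnitriangular) (h1 : R1.IsRook) (h2 : R2.IsRook)
    (h : U * R1 * V = R2) : R1 = R2 := by
  classical
  set T : Matrix (Fin n) (Fin m) K := U * R1 with hT
  have hTV : T * V = R2 := h
  -- (a1)
  have a1 : ∀ r j, R1 r j ≠ 0 → T r j = R1 r j ∧ ∀ i, r < i → T i j = 0 := by
    intro r j hrj
    have hcol : ∀ k, k ≠ r → R1 k j = 0 := by
      intro k hk
      by_contra hkj
      exact hk (h1.2 k r j hkj hrj)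
    constructor
    · rw [hT, Matrix.mul_apply, Finset.sum_eq_single r]
      · rw [hU.1 r, one_mul]
      · intro k _ hk; rw [hcol k hk, mul_zero]
      · simp
    · intro i hri
      rw [hT, Matrix.mul_apply]
      apply Finset.sum_eq_zero
      intro k _
      rcases eq_or_ne k r with rfl | hk
      · rw [hU.2 i k hri, zero_mul]
      · rw [hcol k hk, mul_zero]
  -- (a3)
  have a3 : ∀ i j, T i j ≠ 0 → ∃ r, i ≤ r ∧ R1 r j ≠ 0 := by
    intro i j hij
    by_contra hno
    push_neg at hno
    apply hij
    rw [hT, Matrix.mul_apply]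
    apply Finset.sum_eq_zero
    intro k _
    rcases lt_or_ge k i with h | h
    · rw [hU.2 i k h, zero_mul]
    · rw [hno k h, mul_zero]
  -- (b1)
  have b1 : ∀ i c, (∀ l, l < c → T i l = 0) → R2 i c = T i c := by
    intro i c hmin
    rw [← hTV, Matrix.mul_apply, Finset.sum_eq_single c]
    · rw [hV.1 c, mul_one]
    · intro l _ hl
      rcases lt_or_gt_of_ne hl with h | h
      · rw [hmin l h, zero_mul]
      · rw [hV.2 l c h, mul_zero]
    · simp
  -- (b2)
  have b2 : ∀ i j, R2 i j ≠ 0 → ∃ c, T i c ≠ 0 := by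
    intro i j hij
    by_contra hno
    push_neg at hno
    apply hij
    rw [← hTV, Matrix.mul_apply]
    exact Finset.sum_eq_zero fun l _ => by rw [hno l, zero_mul]
  -- leftmost nonzero of a nonzero row of T is a nonzero entry of R2
  have step1 : ∀ i, (∃ c, T i c ≠ 0) →
      ∃ c, T i c ≠ 0 ∧ (∀ l, l < c → T i l = 0) ∧ R2 i c = T i c := by
    intro i hi
    have hne : (Finset.univ.filter (fun c => T i c ≠ 0)).Nonempty := by
      obtain ⟨c, hc⟩ := hi
      exact ⟨c, by simp [hc]⟩
    set c := (Finset.univ.filter (fun c => T i c ≠ 0)).min' hne with hc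
    have hcmem := (Finset.univ.filter (fun c => T i c ≠ 0)).min'_mem hne
    rw [Finset.mem_filter] at hcmem
    have hmin : ∀ l, l < c → T i l = 0 := by
      intro l hl
      by_contra hl0
      have : c ≤ l := Finset.min'_le _ l (by simp [hl0])
      exact absurd hl (not_lt.2 this)
    exact ⟨c, hcmem.2, hmin, b1 i c hmin⟩
  -- for rows with a nonzero R2-entry, get the matching row in R1
  have exh : ∀ i : Fin n, (∃ j, R2 i j ≠ 0) →
      ∃ r, i ≤ r ∧ ∃ c, R2 i c ≠ 0 ∧ R1 r c ≠ 0 := by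
    intro i ⟨j, hj⟩
    obtain ⟨c, hc, hmin, hR2c⟩ := step1 i (b2 i j hj)
    obtain ⟨r, hir, hr⟩ := a3 i c hc
    exact ⟨r, hir, c, by rw [hR2c]; exact hc, hr⟩
  -- define h
  set S : Finset (Fin n) := Finset.univ.filter (fun i => ∃ j, R2 i j ≠ 0) with hS
  have memS : ∀ i, i ∈ S ↔ ∃ j, R2 i j ≠ 0 := fun i => by simp [hS]
  let hfun : Fin n → Fin n := fun i =>
    if H : ∃ r, i ≤ r ∧ ∃ c, R2 i c ≠ 0 ∧ R1 r c ≠ 0 then H.choose else i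
  have hfun_spec : ∀ i ∈ S, i ≤ hfun i ∧ ∃ c, R2 i c ≠ 0 ∧ R1 (hfun i) c ≠ 0 := by
    intro i hi
    have H := exh i ((memS i).1 hi)
    simp only [hfun, dif_pos H]
    exact H.choose_spec
  have hfun_le : ∀ i ∈ S, i ≤ hfun i := fun i hi => (hfun_spec i hi).1
  have hfun_mapsto : ∀ i ∈ S, hfun i ∈ S := by
    intro i hi
    obtain ⟨c, hR2c, hR1c⟩ := (hfun_spec i hi).2
    have hT := (a1 (hfun i) c hR1c).1
    obtain ⟨c', hc', _, hR2c'⟩ := step1 (hfun i) ⟨c, by rw [hT]; exact hR1c⟩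
    exact (memS _).2 ⟨c', by rw [hR2c']; exact hc'⟩
  have hfun_inj : ∀ i ∈ S, ∀ i' ∈ S, hfun i = hfun i' → i = i' := by
    intro i hi i' hi' heq
    obtain ⟨c, hR2c, hR1c⟩ := (hfun_spec i hi).2
    obtain ⟨c', hR2c', hR1c'⟩ := (hfun_spec i' hi').2
    rw [heq] at hR1c
    have : c = c' := h1.1 (hfun i') c c' hR1c hR1c'
    subst this
    exact h2.2 i i' c hR2c hR2c'
  -- h is the identity on S
  have hfun_id : ∀ i ∈ S, hfun i = i := by
    have himg : S.image hfun = S := by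
      apply Finset.eq_of_subset_of_card_le
      · intro x hx
        obtain ⟨i, hi, rfl⟩ := Finset.mem_image.1 hx
        exact hfun_mapsto i hi
      · rw [Finset.card_image_of_injOn hfun_inj]
    have hsum : ∑ i ∈ S, ((hfun i : ℕ)) = ∑ i ∈ S, (i : ℕ) := by
      conv_rhs => rw [← himg]
      rw [Finset.sum_image hfun_inj]
    have hle : ∀ i ∈ S, (i : ℕ) ≤ (hfun i : ℕ) := fun i hi => hfun_le i hi
    have := (Finset.sum_eq_sum_iff_of_le hle).1 hsum.symm
    intro i hi
    exact (Fin.ext (this i hi)).symm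
  -- direction 1: R2 nonzero entries agree with R1
  have dir1 : ∀ i c, R2 i c ≠ 0 → R1 i c = R2 i c := by
    intro i c hic
    have hi : i ∈ S := (memS i).2 ⟨c, hic⟩
    obtain ⟨c', hR2c', hR1c'⟩ := (hfun_spec i hi).2
    rw [hfun_id i hi] at hR1c'
    have hcc : c = c' := h2.1 i c c' hic hR2c'
    subst hcc
    -- R1 i c ≠ 0; compute values
    have hT := (a1 i c hR1c').1
    obtain ⟨j, hj⟩ := (memS i).1 hi
    obtain ⟨c'', hc'', hmin, hR2c''⟩ := step1 i (b2 i j hj)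
    have : c = c'' := h2.1 i c c'' hic (by rw [hR2c'']; exact hc'')
    subst this
    rw [hR2c'', hT]
  -- direction 2: R1 nonzero entries are R2 nonzero entries
  have dir2 : ∀ r j, R1 r j ≠ 0 → R2 r j ≠ 0 := by
    intro r j hrj
    have hTrj := (a1 r j hrj).1
    obtain ⟨c', hc', _, hR2c'⟩ := step1 r ⟨j, by rw [hTrj]; exact hrj⟩
    have hr : r ∈ S := (memS r).2 ⟨c', by rw [hR2c']; exact hc'⟩
    obtain ⟨c2, hR2c2, hR1c2⟩ := (hfun_spec r hr).2
    rw [hfun_id r hr] at hR1c2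
    have : j = c2 := h1.1 r j c2 hrj hR1c2
    subst this
    exact hR2c2
  ext i j
  by_cases hij : R2 i j ≠ 0
  · exact dir1 i j hij
  · push_neg at hij
    rw [hij]
    by_contra hR1
    exact absurd hij (dir2 i j hR1)

end RookAux

/-- The rook matrix is unchanged under extension of the base field: if `φ : F → K` is
a homomorphism of fields and `R` is the rook matrix of `M` over `F`, then the rook
matrix of `M.map φ` over `K` is `R.map φ`. -/
theorem rook_matrix_map_field_hom {F K : Type*} [Field F] [Field K] (φ : F →+* K)
    {n m : ℕ} (M R : Matrix (Fin n) (Fin m) F) (hRrook : R.IsRook)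
    (hRorb : ∃ (A : Matrix (Fin n) (Fin n) F) (B : Matrix (Fin m) (Fin m) F),
      A.IsUnitriangular ∧ B.IsUnitriangular ∧ A * M * B = R)
    (R' : Matrix (Fin n) (Fin m) K) (hR'rook : R'.IsRook)
    (hR'orb : ∃ (A : Matrix (Fin n) (Fin n) K) (B : Matrix (Fin m) (Fin m) K),
      A.IsUnitriangular ∧ B.IsUnitriangular ∧ A * M.map φ * B = R') :
    R' = R.map φ := by
  obtain ⟨A, B, hA, hB, hAB⟩ := hRorb
  obtain ⟨A', B', hA', hB', hAB'⟩ := hR'orb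
  have hAφ := RookAux.uni_map φ hA
  have hBφ := RookAux.uni_map φ hB
  have hAdet : IsUnit (A.map φ).det := by rw [RookAux.uni_det hAφ]; exact isUnit_one
  have hBdet : IsUnit (B.map φ).det := by rw [RookAux.uni_det hBφ]; exact isUnit_one
  have hRφ : (A.map φ) * (M.map φ) * (B.map φ) = R.map φ := by
    rw [← hAB]
    rw [Matrix.map_mul, Matrix.map_mul]
  -- R' = U * (R.map φ) * V
  have key : (A' * (A.map φ)⁻¹) * (R.map φ) * ((B.map φ)⁻¹ * B') = R' := by
    rw [← hRφ, ← hAB']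
    simp only [Matrix.mul_assoc]
    rw [Matrix.mul_nonsing_inv_cancel_left _ _ hBdet,
      Matrix.nonsing_inv_mul_cancel_left _ _ hAdet]
  have hU : (A' * (A.map φ)⁻¹).IsUnitriangular :=
    RookAux.uni_mul hA' (RookAux.uni_inv hAφ)
  have hV : ((B.map φ)⁻¹ * B').IsUnitriangular :=
    RookAux.uni_mul (RookAux.uni_inv hBφ) hB'
  exact (RookAux.rook_unique_s14 hU hV (RookAux.rook_map φ hRrook) hR'rook key).symm
end

section
/- Let F be a field, let M be an invertible n×n matrix over F and let R be the rook matrix of M. Then R is a monomial matrix, so there is a unique permutation σ of {1, …, n} such that R_{σ(j), j} ≠ 0 for all j. Moreover, the product of the nonzero entries of R equals the sign of σ times the determinant of M: ∏_{j=1}^{n} R_{σ(j), j} = sign(σ) · det M. -/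
lemma unitriangular_det {F : Type*} [Field F] {n : ℕ} {A : Matrix (Fin n) (Fin n) F}
    (hA : A.IsUnitriangular) : A.det = 1 := by
  rw [Matrix.det_of_upperTriangular (fun i j h => hA.2 i j h)]
  simp [hA.1]

/-- The rook matrix `R` of an invertible matrix `M` is a monomial matrix: there is a
unique permutation `σ` with `R (σ j) j ≠ 0` for all `j`, and the product of the
nonzero entries of `R` equals `sign σ * det M`. -/
theorem rook_matrix_of_invertible_det {F : Type*} [Field F] {n : ℕ}
    (M R : Matrix (Fin n) (Fin n) F) (hM : IsUnit M) (hRrook : R.IsRook)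
    (hRorb : ∃ (A B : Matrix (Fin n) (Fin n) F),
      A.IsUnitriangular ∧ B.IsUnitriangular ∧ A * M * B = R) :
    ∃ σ : Equiv.Perm (Fin n),
      (∀ j, R (σ j) j ≠ 0) ∧
      (∀ σ' : Equiv.Perm (Fin n), (∀ j, R (σ' j) j ≠ 0) → σ' = σ) ∧
      ∏ j, R (σ j) j = ((Equiv.Perm.sign σ : ℤ) : F) * M.det := by
  obtain ⟨A, B, hA, hB, hABM⟩ := hRorb
  have hdetM : M.det ≠ 0 := by
    have := hM.map (Matrix.detMonoidHom (n := Fin n) (R := F))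
    simpa using this.ne_zero
  have hdetR : R.det = M.det := by
    rw [← hABM, Matrix.det_mul, Matrix.det_mul, unitriangular_det hA, unitriangular_det hB]
    ring
  -- each column has a nonzero entry
  have hcol : ∀ j, ∃ i, R i j ≠ 0 := by
    intro j
    by_contra h
    push_neg at h
    have : R.det = 0 := by
      apply Matrix.det_eq_zero_of_column_eq_zero j
      intro i; exact h i
    rw [hdetR] at this; exact hdetM this
  choose f hf using hcol
  have hinj : Function.Injective f := by
    intro j j' h
    exact hRrook.1 (f j) j j' (hf j) (h ▸ hf j')
  let σ : Equiv.Perm (Fin n) := Equiv.ofBijective f (Finite.injective_iff_bijective.mp hinj)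
  have hσ : ∀ j, R (σ j) j ≠ 0 := hf
  refine ⟨σ, hσ, ?_, ?_⟩
  · intro σ' hσ'
    refine Equiv.ext fun j => ?_
    exact hRrook.2 (σ' j) (σ j) j (hσ' j) (hσ j)
  · have hdet : R.det = (Equiv.Perm.sign σ : ℤ) * ∏ j, R (σ j) j := by
      rw [Matrix.det_apply]
      rw [Finset.sum_eq_single σ]
      · simp [Units.smul_def, zsmul_eq_mul]
      · intro τ _ hτ
        have : ∃ j, τ j ≠ σ j := by
          by_contra h
          push_neg at h
          exact hτ (Equiv.ext h)
        obtain ⟨j, hj⟩ := this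
        have : R (τ j) j = 0 := by
          by_contra hne
          exact hj (hRrook.2 (τ j) (σ j) j hne (hσ j))
        have hz : ∏ i, R (τ i) i = 0 := Finset.prod_eq_zero (Finset.mem_univ j) this
        rw [hz, smul_zero]
      · simp
    have hs : ((Equiv.Perm.sign σ : ℤ) : F) * ((Equiv.Perm.sign σ : ℤ) : F) = 1 := by
      rcases Int.units_eq_one_or (Equiv.Perm.sign σ) with h | h <;> rw [h] <;> norm_num
    calc ∏ j, R (σ j) j
        = ((Equiv.Perm.sign σ : ℤ) : F) * ((Equiv.Perm.sign σ : ℤ) : F) * ∏ j, R (σ j) j := by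
          rw [hs, one_mul]
      _ = ((Equiv.Perm.sign σ : ℤ) : F) * R.det := by rw [hdet]; ring
      _ = ((Equiv.Perm.sign σ : ℤ) : F) * M.det := by rw [hdetR]
end

section
/- Let F be a field, let V and W be finite-dimensional F-vector spaces with dim V = n and dim W = m, let A : V → W be an injective linear map, and let w = (w_1, …, w_m) be an ordered basis of W. Then there exist an ordered basis w' = (w'_1, …, w'_m) of W unitriangularly equivalent to w, an ordered basis v = (v_1, …, v_n) of V, and a strictly increasing map t : {1, …, n} → {1, …, m} such that A(v_s) = w'_{t(s)} for every s ∈ {1, …, n}. -/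
/-- Two ordered bases `v`, `v'` are unitriangularly equivalent if for each `s`
the vector `v' s - v s` lies in the span of the preceding vectors `v t`, `t < s`. -/
def UnitriEquiv {F V : Type*} [Field F] [AddCommGroup V] [Module F V] {n : ℕ}
    (v v' : Module.Basis (Fin n) F V) : Prop :=
  ∀ s : Fin n, v' s - v s ∈ Submodule.span F (v '' {t : Fin n | t < s})

open Submodule Module Set
/-- For an injective linear map `A : V → W` and a basis `w` of `W`, one can find a
basis `w'` of `W` unitriangularly equivalent to `w`, a basis `v` of `V`, and a
strictly increasing map `t` such that `A (v s) = w' (t s)` for every `s`. -/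
theorem injective_basis_adapted {F V W : Type*} [Field F]
    [AddCommGroup V] [Module F V] [AddCommGroup W] [Module F W]
    {n m : ℕ} (hV : Module.finrank F V = n)
    (A : V →ₗ[F] W) (hA : Function.Injective A)
    (w : Module.Basis (Fin m) F W) :
    ∃ (w' : Module.Basis (Fin m) F W) (v : Module.Basis (Fin n) F V) (t : Fin n → Fin m),
      UnitriEquiv w w' ∧ StrictMono t ∧ ∀ s, A (v s) = w' (t s) := by
  classical
  have hWfd : FiniteDimensional F W := Module.Finite.of_basis w
  have hVfd : FiniteDimensional F V := FiniteDimensional.of_injective A hA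
  rcases Nat.eq_zero_or_pos n with hn | hn
  · -- trivial case n = 0
    subst hn
    have : Subsingleton V := Module.finrank_zero_iff.mp hV
    refine ⟨w, Basis.empty V, Fin.elim0, fun s => by simpa using zero_mem _,
      fun a => a.elim0, fun s => s.elim0⟩
  have : Nonempty (Fin n) := ⟨⟨0, hn⟩⟩
  set U : Submodule F W := LinearMap.range A with hUdef
  have hU : finrank F U = n := by
    rw [hUdef, LinearMap.finrank_range_of_inj hA, hV]
  -- the filtration by spans of initial segments of the basis
  set Wle : ℕ → Submodule F W := fun k => span F (w '' {j : Fin m | (j : ℕ) < k}) with hWledef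
  have hmono : Monotone Wle := fun k l hkl =>
    span_mono (image_mono (fun j hj => lt_of_lt_of_le hj hkl))
  have hmem : ∀ (x : W) (k : ℕ), x ∈ Wle k ↔ ∀ j : Fin m, k ≤ (j : ℕ) → w.repr x j = 0 := by
    intro x k
    rw [hWledef, Basis.mem_span_image]
    constructor
    · intro h j hj
      by_contra hne
      exact absurd (h (Finsupp.mem_support_iff.mpr hne)) (by simpa using hj)
    · intro h j hj
      by_contra hne
      exact Finsupp.mem_support_iff.mp hj (h j (le_of_not_gt hne))
  have hWle0 : Wle 0 = ⊥ := by
    rw [hWledef]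
    convert span_empty
    simp
  have hWlem : Wle m = ⊤ := by
    have : {j : Fin m | (j : ℕ) < m} = Set.univ := by
      ext j; simp [j.isLt]
    rw [hWledef]; dsimp only
    rw [this, Set.image_univ, w.span_eq]
  set d : ℕ → ℕ := fun k => finrank F ↥(U ⊓ Wle k) with hddef
  have hd0 : d 0 = 0 := by simp [hddef, hWle0]
  have hdm : d m = n := by
    show finrank F ↥(U ⊓ Wle m) = n
    rw [hWlem]
    rw [inf_top_eq]
    exact hU
  have hdmono : ∀ k, d k ≤ d (k + 1) :=
    fun k => Submodule.finrank_mono (inf_le_inf_left U (hmono (Nat.le_succ k)))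
  -- each step of the filtration dimension increases by at most 1
  have hstep : ∀ k, k < m → d (k + 1) ≤ d k + 1 := by
    intro k hk
    set kf : Fin m := ⟨k, hk⟩ with hkf
    set S : Submodule F W := U ⊓ Wle (k + 1) with hSdef
    set φ : S →ₗ[F] F := (w.coord kf).comp S.subtype with hφ
    have hrk := LinearMap.finrank_range_add_finrank_ker φ
    have h1 : finrank F (LinearMap.range φ) ≤ 1 := by
      simpa using (LinearMap.range φ).finrank_le
    have h2 : finrank F (LinearMap.ker φ) ≤ d k := by
      have hmap : (LinearMap.ker φ).map S.subtype ≤ U ⊓ Wle k := by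
        rintro x ⟨⟨y, hyS⟩, hyker, rfl⟩
        refine ⟨hyS.1, (hmem y k).mpr fun j hj => ?_⟩
        rcases eq_or_lt_of_le hj with hj' | hj'
        · have : j = kf := by ext; exact hj'.symm
          subst this
          simpa [hφ, Basis.coord_apply] using hyker
        · exact (hmem y (k + 1)).mp hyS.2 j hj'
      calc finrank F (LinearMap.ker φ)
          = finrank F ((LinearMap.ker φ).map S.subtype) :=
            (Submodule.finrank_map_subtype_eq S _).symm
        _ ≤ d k := Submodule.finrank_mono hmap
    have : finrank F S = d (k + 1) := rfl
    omega
  -- the pivot set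
  set P : ℕ → Prop := fun k => d k < d (k + 1) with hPdef
  have hPd : ∀ k, k < m → DecidablePred P := fun _ _ => Classical.decPred P
  set T : Finset (Fin m) := Finset.univ.filter (fun k : Fin m => P (k : ℕ)) with hTdef
  -- counting : |T| = n
  have htel : ∀ N, N ≤ m → d N = ((Finset.range N).filter P).card := by
    intro N
    induction N with
    | zero => simp [hd0]
    | succ N ih =>
      intro hN
      have hN' : N ≤ m := Nat.le_of_succ_le hN
      rw [Finset.range_add_one, Finset.filter_insert]
      by_cases hP : P N
      · rw [if_pos hP, Finset.card_insert_of_notMem (by simp), ← ih hN']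
        have hP' : d N < d (N + 1) := hP
        have h2 := hstep N hN
        omega
      · rw [if_neg hP, ← ih hN']
        have hP' : ¬ d N < d (N + 1) := hP
        have h2 := hdmono N
        omega
  have hTcard : T.card = n := by
    have h1 : T.card = ∑ k : Fin m, if P (k : ℕ) then 1 else 0 := by
      rw [hTdef, Finset.card_filter]
    have h2 : ((Finset.range m).filter P).card = ∑ k ∈ Finset.range m, if P k then 1 else 0 :=
      Finset.card_filter _ _
    rw [h1, Fin.sum_univ_eq_sum_range (fun k => if P k then 1 else 0), ← h2,
      ← htel m le_rfl, hdm]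
  -- choose pivot vectors
  have key : ∀ k : Fin m, ∃ y : W,
      (P (k : ℕ) → y ∈ U ∧ y ∈ Wle ((k : ℕ) + 1) ∧ w.repr y k = 1) ∧
      (¬ P (k : ℕ) → y = w k) := by
    intro k
    by_cases hP : P (k : ℕ)
    · have hle : U ⊓ Wle (k : ℕ) ≤ U ⊓ Wle ((k : ℕ) + 1) :=
        inf_le_inf_left U (hmono (Nat.le_succ _))
      have hnle : ¬ (U ⊓ Wle ((k : ℕ) + 1) ≤ U ⊓ Wle (k : ℕ)) := by
        intro h
        have h' : d ((k : ℕ) + 1) ≤ d (k : ℕ) := Submodule.finrank_mono h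
        have hP' : d (k : ℕ) < d ((k : ℕ) + 1) := hP
        omega
      obtain ⟨u, huS, hu⟩ := SetLike.not_le_iff_exists.mp hnle
      have huU : u ∈ U := huS.1
      have huW : u ∈ Wle ((k : ℕ) + 1) := huS.2
      have hc : w.repr u k ≠ 0 := by
        intro hc0
        apply hu
        refine ⟨huU, (hmem u (k : ℕ)).mpr fun j hj => ?_⟩
        rcases eq_or_lt_of_le hj with hj' | hj'
        · have : j = k := by ext; exact hj'.symm
          rw [this]; exact hc0
        · exact (hmem u ((k : ℕ) + 1)).mp huW j hj'
      refine ⟨(w.repr u k)⁻¹ • u, fun _ => ⟨U.smul_mem _ huU,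
        (Wle _).smul_mem _ huW, ?_⟩, fun h => absurd hP h⟩
      rw [map_smul]
      simp [inv_mul_cancel₀ hc]
    · exact ⟨w k, fun h => absurd h hP, fun _ => rfl⟩
  choose f hf1 hf2 using key
  -- the unitriangular difference property
  have hunitri : ∀ k : Fin m, f k - w k ∈ span F (w '' {j : Fin m | j < k}) := by
    intro k
    by_cases hP : P (k : ℕ)
    · obtain ⟨hfU, hfW, hfc⟩ := hf1 k hP
      rw [Basis.mem_span_image]
      intro j hj
      simp only [Finset.mem_coe, Finsupp.mem_support_iff] at hj
      by_contra hjk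
      apply hj
      have hjk' : (k : ℕ) ≤ (j : ℕ) := not_lt.mp hjk
      rw [map_sub, Finsupp.sub_apply]
      rcases eq_or_lt_of_le hjk' with hj' | hj'
      · have : j = k := by ext; exact hj'.symm
        rw [this, hfc, Basis.repr_self]
        simp
      · rw [(hmem (f k) ((k : ℕ) + 1)).mp hfW j hj', Basis.repr_self,
          Finsupp.single_apply]
        have : k ≠ j := by intro h; subst h; omega
        simp [this]
    · rw [hf2 k hP]
      simpa using zero_mem _
  -- f spans W
  have hwmem : ∀ (N : ℕ) (k : Fin m), (k : ℕ) < N → w k ∈ span F (Set.range f) := by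
    intro N
    induction N with
    | zero => exact fun k hk => absurd hk (by omega)
    | succ N ih =>
      intro k hk
      have h1 : f k ∈ span F (Set.range f) := subset_span (Set.mem_range_self k)
      have h2 : f k - w k ∈ span F (Set.range f) := by
        refine span_le.mpr ?_ (hunitri k)
        rintro y ⟨j, hj, rfl⟩
        have hjk : (j : ℕ) < (k : ℕ) := hj
        exact ih j (by omega)
      have h3 : w k = f k - (f k - w k) := by abel
      rw [h3]
      exact sub_mem h1 h2
  have hspan : ⊤ ≤ span F (Set.range f) := by
    rw [← w.span_eq]
    exact span_le.mpr (by rintro x ⟨k, rfl⟩; exact hwmem m k k.isLt)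
  have hcardW : Fintype.card (Fin m) = finrank F W := by
    simp [finrank_eq_card_basis w]
  set w' : Basis (Fin m) F W := basisOfTopLeSpanOfCardEqFinrank f hspan hcardW with hw'def
  have hw'coe : ⇑w' = f := coe_basisOfTopLeSpanOfCardEqFinrank f hspan hcardW
  -- the strictly increasing pivot enumeration
  set iso := T.orderIsoOfFin hTcard with hiso
  set t : Fin n → Fin m := fun s => (iso s : Fin m) with htdef
  have htmono : StrictMono t := fun a b hab => iso.strictMono hab
  have htT : ∀ s, t s ∈ T := fun s => (iso s).2
  have htP : ∀ s, P ((t s : Fin m) : ℕ) := by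
    intro s
    have := htT s
    rw [hTdef, Finset.mem_filter] at this
    exact this.2
  -- pull back pivot vectors through A
  have hx : ∀ s : Fin n, ∃ x : V, A x = f (t s) := by
    intro s
    exact (hf1 (t s) (htP s)).1
  choose x hxA using hx
  have hli : LinearIndependent F x := by
    have hinj : Function.Injective t := htmono.injective
    have h1 : LinearIndependent F (⇑w' ∘ t) := w'.linearIndependent.comp t hinj
    have h2 : ⇑A ∘ x = ⇑w' ∘ t := by
      funext s
      simp [Function.comp, hxA s, hw'coe]
    exact LinearIndependent.of_comp A (by rw [h2]; exact h1)
  have hcardV : Fintype.card (Fin n) = finrank F V := by simp [hV]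
  set v : Basis (Fin n) F V := basisOfLinearIndependentOfCardEqFinrank hli hcardV with hvdef
  have hvcoe : ⇑v = x := coe_basisOfLinearIndependentOfCardEqFinrank hli hcardV
  refine ⟨w', v, t, ?_, htmono, ?_⟩
  · intro s
    rw [hw'coe]
    exact hunitri s
  · intro s
    rw [hvcoe, hw'coe, hxA s]
end
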